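/- arXiv:2601.05795 — 14 statements merged into one kernel-verified Lean document; each statement's English description precedes it below -/
import Mathlib

section
/- For any three normalized circle quadruples K₁, K₂, K₃, one has 4U = Δ₂² + Δ₃² − Δ₁Δ₄. -/
theorem stmt_1
    (a₁ b₁ c₁ d₁ a₂ b₂ c₂ d₂ a₃ b₃ c₃ d₃ : ℝ)
    (h₁ : b₁^2 + c₁^2 - a₁*d₁ = 1)
    (h₂ : b₂^2 + c₂^2 - a₂*d₂ = 1)
    (h₃ : b₃^2 + c₃^2 - a₃*d₃ = 1)
    (Q₁ Q₂ Q₃ : ℝ)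
    (hQ₁ : 4*Q₁ = 2 + a₁*d₂ + a₂*d₁ - 2*(b₁*b₂ + c₁*c₂))
    (hQ₂ : 4*Q₂ = 2 + a₂*d₃ + a₃*d₂ - 2*(b₂*b₃ + c₂*c₃))
    (hQ₃ : 4*Q₃ = 2 + a₃*d₁ + a₁*d₃ - 2*(b₃*b₁ + c₃*c₁))
    (U : ℝ)
    (hU : U = Q₁*(Q₁-2*Q₂) + Q₂*(Q₂-2*Q₃) + Q₃*(Q₃-2*Q₁) + 4*Q₁*Q₂*Q₃)
    (Δ₁ Δ₂ Δ₃ Δ₄ : ℝ)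
    (hΔ₁ : Δ₁ = -Matrix.det !![b₁,c₁,d₁; b₂,c₂,d₂; b₃,c₃,d₃])
    (hΔ₂ : Δ₂ = -(1/2) * Matrix.det !![a₁,c₁,d₁; a₂,c₂,d₂; a₃,c₃,d₃])
    (hΔ₃ : Δ₃ = (1/2) * Matrix.det !![a₁,b₁,d₁; a₂,b₂,d₂; a₃,b₃,d₃])
    (hΔ₄ : Δ₄ = Matrix.det !![a₁,b₁,c₁; a₂,b₂,c₂; a₃,b₃,c₃]) :
    4*U = Δ₂^2 + Δ₃^2 - Δ₁*Δ₄ := by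
  rw [Matrix.det_fin_three] at hΔ₁ hΔ₂ hΔ₃ hΔ₄
  norm_num [Matrix.cons_val_zero, Matrix.cons_val_one, Matrix.head_cons,
    Matrix.cons_val_two, Matrix.tail_cons, Matrix.head_fin_const] at hΔ₁ hΔ₂ hΔ₃ hΔ₄
  have e1 : Q₁ = (2 + a₁*d₂ + a₂*d₁ - 2*(b₁*b₂ + c₁*c₂))/4 := by linarith
  have e2 : Q₂ = (2 + a₂*d₃ + a₃*d₂ - 2*(b₂*b₃ + c₂*c₃))/4 := by linarith
  have e3 : Q₃ = (2 + a₃*d₁ + a₁*d₃ - 2*(b₃*b₁ + c₃*c₁))/4 := by linarith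
  subst hU hΔ₁ hΔ₂ hΔ₃ hΔ₄ e1 e2 e3
  linear_combination ((0) + (1)*b₃^2 + (-1/4)*d₂^2*a₃^2 + (1)*c₂*d₂*a₃*c₃ + (-1)*c₂^2*a₃*d₃ + (1)*b₂*d₂*a₃*b₃ + (-2)*b₂*c₂*b₃*c₃ + (1)*b₂^2 + (-2)*b₂^2*b₃^2 + (-1)*a₂*d₂*c₃^2 + (1/2)*a₂*d₂*a₃*d₃ + (1)*a₂*c₂*c₃*d₃ + (1)*a₂*b₂*b₃*d₃ + (-1/4)*a₂^2*d₃^2) * h₁ + ((1) + (-1)*b₃^2 + (-1/4)*d₁^2*a₃^2 + (1)*c₁*d₁*a₃*c₃ + (-1)*c₁^2 + (2)*c₁^2*b₃^2 + (-1)*c₁^2*a₃*d₃ + (1)*b₁*d₁*a₃*b₃ + (-2)*b₁*c₁*b₃*c₃ + (1)*a₁*d₁ + (-1)*a₁*d₁*c₃^2 + (-2)*a₁*d₁*b₃^2 + (1/2)*a₁*d₁*a₃*d₃ + (1)*a₁*c₁*c₃*d₃ + (1)*a₁*b₁*b₃*d₃ + (-1/4)*a₁^2*d₃^2) * h₂ +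 ((1)*c₂^2 + (-1)*a₂*d₂ + (-1/4)*d₁^2*a₂^2 + (1)*c₁*d₁*a₂*c₂ + (1)*c₁^2 + (-2)*c₁^2*c₂^2 + (1)*c₁^2*a₂*d₂ + (1)*b₁*d₁*a₂*b₂ + (-2)*b₁*c₁*b₂*c₂ + (-1)*a₁*d₁ + (1)*a₁*d₁*c₂^2 + (-3/2)*a₁*d₁*a₂*d₂ + (1)*a₁*c₁*c₂*d₂ + (1)*a₁*b₁*b₂*d₂ + (-1/4)*a₁^2*d₂^2) * h₃
end

section
/- For any three normalized circle quadruples K₁, K₂, K₃, one has V² − U·W = Δ₄²·Q₁Q₂Q₃. -/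
theorem aux_S (a₁ b₁ c₁ d₁ a₂ b₂ c₂ d₂ a₃ b₃ c₃ d₃ : ℝ)
    (h₁ : b₁^2 + c₁^2 - a₁*d₁ = 1)
    (h₂ : b₂^2 + c₂^2 - a₂*d₂ = 1)
    (h₃ : b₃^2 + c₃^2 - a₃*d₃ = 1)
    (Q₁ Q₂ Q₃ : ℝ)
    (hQ₁ : 4*Q₁ = 2 + a₁*d₂ + a₂*d₁ - 2*(b₁*b₂ + c₁*c₂))
    (hQ₂ : 4*Q₂ = 2 + a₂*d₃ + a₃*d₂ - 2*(b₂*b₃ + c₂*c₃))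
    (hQ₃ : 4*Q₃ = 2 + a₃*d₁ + a₁*d₃ - 2*(b₃*b₁ + c₃*c₁)) :
    (4:ℝ)*a₃^2*Q₁ + (-4:ℝ)*a₃^2*Q₁^2 + (-4:ℝ)*a₂*a₃*Q₃ + (4:ℝ)*a₂*a₃*Q₂ + (-4:ℝ)*a₂*a₃*Q₁ + (8:ℝ)*a₂*a₃*Q₁*Q₃ + (4:ℝ)*a₂^2*Q₃ + (-4:ℝ)*a₂^2*Q₃^2 + (4:ℝ)*a₁*a₃*Q₃ + (-4:ℝ)*a₁*a₃*Q₂ + (-4:ℝ)*a₁*a₃*Q₁ + (8:ℝ)*a₁*a₃*Q₁*Q₂ + (-4:ℝ)*a₁*a₂*Q₃ + (-4:ℝ)*a₁*a₂*Q₂ + (8:ℝ)*a₁*a₂*Q₂*Q₃ + (4:ℝ)*a₁*a₂*Q₁ + (4:ℝ)*a₁^2*Q₂ + (-4:ℝ)*a₁^2*Q₂^2 = (Matrix.det !![a₁,b₁,c₁; a₂,b₂,c₂; a₃,b₃,c₃])^2 := by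
  simp [Matrix.det_fin_three]
  linear_combination (1/4:ℝ)*((2:ℝ)*a₃^2 + (-4:ℝ)*a₃^2*Q₁ + (-4:ℝ)*a₂*a₃ + (8:ℝ)*a₂*a₃*Q₃ + (-1:ℝ)*d₁*a₂*a₃^2 + (2:ℝ)*c₁*c₂*a₃^2 + (2:ℝ)*b₁*b₂*a₃^2 + (-4:ℝ)*a₁*a₃ + (8:ℝ)*a₁*a₃*Q₂ + (-1:ℝ)*a₁*d₂*a₃^2 + (4:ℝ)*a₁*a₂)*hQ₁ + (1/4:ℝ)*((4:ℝ)*a₂*a₃ + (-4:ℝ)*a₁*a₂ + (8:ℝ)*a₁*a₂*Q₃ + (2:ℝ)*a₁*d₁*a₂*a₃ + (-4:ℝ)*a₁*c₁*c₂*a₃ + (-4:ℝ)*a₁*b₁*b₂*a₃ + (2:ℝ)*a₁^2 + (-4:ℝ)*a₁^2*Q₂ + (1:ℝ)*a₁^2*d₂*a₃ + (2:ℝ)*a₁^2*c₂*c₃ + (2:ℝ)*a₁^2*b₂*b₃ + (-1:ℝ)*a₁^2*a₂*d₃)*hQ₂ + (1/4:ℝ)*((2:ℝ)*a₂^2 +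 (-4:ℝ)*a₂^2*Q₃ + (1:ℝ)*d₁*a₂^2*a₃ + (-4:ℝ)*c₁*a₂*c₂*a₃ + (2:ℝ)*c₁*a₂^2*c₃ + (-4:ℝ)*b₁*a₂*b₂*a₃ + (2:ℝ)*b₁*a₂^2*b₃ + (4:ℝ)*a₁*a₃ + (4:ℝ)*a₁*a₂*d₂*a₃ + (-4:ℝ)*a₁*a₂*c₂*c₃ + (-4:ℝ)*a₁*a₂*b₂*b₃ + (1:ℝ)*a₁*a₂^2*d₃)*hQ₃ + ((-1:ℝ)*c₂^2*a₃^2 + (-1:ℝ)*b₂^2*a₃^2 + (2:ℝ)*a₂*c₂*a₃*c₃ + (2:ℝ)*a₂*b₂*a₃*b₃ + (-1:ℝ)*a₂^2 + (-1:ℝ)*a₂^2*a₃*d₃)*h₁ + ((-1:ℝ)*a₃^2 + (-1:ℝ)*a₁*d₁*a₃^2 + (2:ℝ)*a₁*c₁*a₃*c₃ + (2:ℝ)*a₁*b₁*a₃*b₃ + (-1:ℝ)*a₁^2 + (-1:ℝ)*a₁^2*a₃*d₃)*h₂ + ((-1:ℝ)*c₁^2*a₂^2 + (-1:ℝ)*b₁^2*a₂^2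 + (2:ℝ)*a₁*c₁*a₂*c₂ + (2:ℝ)*a₁*b₁*a₂*b₂ + (-1:ℝ)*a₁^2*c₂^2 + (-1:ℝ)*a₁^2*b₂^2)*h₃

theorem stmt_3
    (a₁ b₁ c₁ d₁ a₂ b₂ c₂ d₂ a₃ b₃ c₃ d₃ : ℝ)
    (h₁ : b₁^2 + c₁^2 - a₁*d₁ = 1)
    (h₂ : b₂^2 + c₂^2 - a₂*d₂ = 1)
    (h₃ : b₃^2 + c₃^2 - a₃*d₃ = 1)
    (Q₁ Q₂ Q₃ : ℝ)
    (hQ₁ : 4*Q₁ = 2 + a₁*d₂ + a₂*d₁ - 2*(b₁*b₂ + c₁*c₂))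
    (hQ₂ : 4*Q₂ = 2 + a₂*d₃ + a₃*d₂ - 2*(b₂*b₃ + c₂*c₃))
    (hQ₃ : 4*Q₃ = 2 + a₃*d₁ + a₁*d₃ - 2*(b₃*b₁ + c₃*c₁))
    (U : ℝ)
    (hU : U = Q₁*(Q₁-2*Q₂) + Q₂*(Q₂-2*Q₃) + Q₃*(Q₃-2*Q₁) + 4*Q₁*Q₂*Q₃)
    (v₁ v₂ v₃ V : ℝ)
    (hv₁ : v₁ = Q₁*(Q₁-Q₂-Q₃))
    (hv₂ : v₂ = Q₂*(Q₂-Q₃-Q₁))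
    (hv₃ : v₃ = Q₃*(Q₃-Q₁-Q₂))
    (hV : V = a₁*v₂ + a₂*v₃ + a₃*v₁)
    (W : ℝ)
    (hW : W = a₁*Q₂*(a₁*Q₂-2*a₂*Q₃) + a₂*Q₃*(a₂*Q₃-2*a₃*Q₁) + a₃*Q₁*(a₃*Q₁-2*a₁*Q₂))
    (Δ₄ : ℝ)
    (hΔ₄ : Δ₄ = Matrix.det !![a₁,b₁,c₁; a₂,b₂,c₂; a₃,b₃,c₃]) :
    V^2 - U*W = Δ₄^2*(Q₁*Q₂*Q₃) := by
  have hS := aux_S a₁ b₁ c₁ d₁ a₂ b₂ c₂ d₂ a₃ b₃ c₃ d₃ h₁ h₂ h₃ Q₁ Q₂ Q₃ hQ₁ hQ₂ hQ₃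
  subst hU hv₁ hv₂ hv₃ hV hW hΔ₄
  linear_combination (Q₁*Q₂*Q₃) * hS
end

section
/- Let K₁, K₂, K₃ be three normalized circle quadruples with U ≠ 0 and Q₁Q₂Q₃ ≥ 0, let ε ∈ {1,−1}, and set r = √(Q₁Q₂Q₃). Define a₀ = (a₁v₂+a₂v₃+a₃v₁ + ε·Δ₄·r)/U, b₀ = (b₁v₂+b₂v₃+b₃v₁ + ε·Δ₂·r)/U, c₀ = (c₁v₂+c₂v₃+c₃v₁ + ε·Δ₃·r)/U, d₀ = (d₁v₂+d₂v₃+d₃v₁ + ε·Δ₁·r)/U. Then b₀² + c₀² − a₀d₀ = 1, and for each i ∈ {1,2,3}: 2b₀b_i + 2c₀c_i − a₀d_i − a_id₀ = 2 (i.e., the circle K₀ = (a₀,b₀,c₀,d₀) is tangent to each given circle, Q(K₀,K_i) = 0). -/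
set_option maxRecDepth 100000
set_option maxHeartbeats 2000000


theorem stmt_4
    (a₁ b₁ c₁ d₁ a₂ b₂ c₂ d₂ a₃ b₃ c₃ d₃ : ℝ)
    (h₁ : b₁^2 + c₁^2 - a₁*d₁ = 1)
    (h₂ : b₂^2 + c₂^2 - a₂*d₂ = 1)
    (h₃ : b₃^2 + c₃^2 - a₃*d₃ = 1)
    (Q₁ Q₂ Q₃ : ℝ)
    (hQ₁ : 4*Q₁ = 2 + a₁*d₂ + a₂*d₁ - 2*(b₁*b₂ + c₁*c₂))
    (hQ₂ : 4*Q₂ = 2 + a₂*d₃ + a₃*d₂ - 2*(b₂*b₃ + c₂*c₃))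
    (hQ₃ : 4*Q₃ = 2 + a₃*d₁ + a₁*d₃ - 2*(b₃*b₁ + c₃*c₁))
    (U : ℝ)
    (hU : U = Q₁*(Q₁-2*Q₂) + Q₂*(Q₂-2*Q₃) + Q₃*(Q₃-2*Q₁) + 4*Q₁*Q₂*Q₃)
    (v₁ v₂ v₃ V : ℝ)
    (hv₁ : v₁ = Q₁*(Q₁-Q₂-Q₃))
    (hv₂ : v₂ = Q₂*(Q₂-Q₃-Q₁))
    (hv₃ : v₃ = Q₃*(Q₃-Q₁-Q₂))
    (hV : V = a₁*v₂ + a₂*v₃ + a₃*v₁)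
    (Δ₁ Δ₂ Δ₃ Δ₄ : ℝ)
    (hΔ₁ : Δ₁ = -Matrix.det !![b₁,c₁,d₁; b₂,c₂,d₂; b₃,c₃,d₃])
    (hΔ₂ : Δ₂ = -(1/2) * Matrix.det !![a₁,c₁,d₁; a₂,c₂,d₂; a₃,c₃,d₃])
    (hΔ₃ : Δ₃ = (1/2) * Matrix.det !![a₁,b₁,d₁; a₂,b₂,d₂; a₃,b₃,d₃])
    (hΔ₄ : Δ₄ = Matrix.det !![a₁,b₁,c₁; a₂,b₂,c₂; a₃,b₃,c₃])
    (hU0 : U ≠ 0)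
    (hQpos : 0 ≤ Q₁*Q₂*Q₃)
    (ε : ℝ) (hε : ε = 1 ∨ ε = -1)
    (r : ℝ) (hr : r = Real.sqrt (Q₁*Q₂*Q₃))
    (a₀ b₀ c₀ d₀ : ℝ)
    (ha₀ : a₀ = (a₁*v₂ + a₂*v₃ + a₃*v₁ + ε*Δ₄*r)/U)
    (hb₀ : b₀ = (b₁*v₂ + b₂*v₃ + b₃*v₁ + ε*Δ₂*r)/U)
    (hc₀ : c₀ = (c₁*v₂ + c₂*v₃ + c₃*v₁ + ε*Δ₃*r)/U)
    (hd₀ : d₀ = (d₁*v₂ + d₂*v₃ + d₃*v₁ + ε*Δ₁*r)/U) :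
    b₀^2 + c₀^2 - a₀*d₀ = 1 ∧
    2*b₀*b₁ + 2*c₀*c₁ - a₀*d₁ - a₁*d₀ = 2 ∧
    2*b₀*b₂ + 2*c₀*c₂ - a₀*d₂ - a₂*d₀ = 2 ∧
    2*b₀*b₃ + 2*c₀*c₃ - a₀*d₃ - a₃*d₀ = 2 := by
  have hr2 : r^2 = Q₁*Q₂*Q₃ := by rw [hr]; exact Real.sq_sqrt hQpos
  have hε2 : ε^2 = 1 := by rcases hε with h | h <;> rw [h] <;> norm_num
  have hB₁ : 2*(b₁*b₂+c₁*c₂) - a₁*d₂ - a₂*d₁ = 2 - 4*Q₁ := by linarith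
  have hB₂ : 2*(b₂*b₃+c₂*c₃) - a₂*d₃ - a₃*d₂ = 2 - 4*Q₂ := by linarith
  have hB₃ : 2*(b₃*b₁+c₃*c₁) - a₃*d₁ - a₁*d₃ = 2 - 4*Q₃ := by linarith
  have e₁ : Matrix.det !![b₁,c₁,d₁; b₂,c₂,d₂; b₃,c₃,d₃]
      = b₁*c₂*d₃ - b₁*c₃*d₂ - b₂*c₁*d₃ + b₂*c₃*d₁ + b₃*c₁*d₂ - b₃*c₂*d₁ := by
    simp [Matrix.det_fin_three]; ring
  have e₂ : Matrix.det !![a₁,c₁,d₁; a₂,c₂,d₂; a₃,c₃,d₃]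
      = a₁*c₂*d₃ - a₁*c₃*d₂ - a₂*c₁*d₃ + a₂*c₃*d₁ + a₃*c₁*d₂ - a₃*c₂*d₁ := by
    simp [Matrix.det_fin_three]; ring
  have e₃ : Matrix.det !![a₁,b₁,d₁; a₂,b₂,d₂; a₃,b₃,d₃]
      = a₁*b₂*d₃ - a₁*b₃*d₂ - a₂*b₁*d₃ + a₂*b₃*d₁ + a₃*b₁*d₂ - a₃*b₂*d₁ := by
    simp [Matrix.det_fin_three]; ring
  have e₄ : Matrix.det !![a₁,b₁,c₁; a₂,b₂,c₂; a₃,b₃,c₃]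
      = a₁*b₂*c₃ - a₁*b₃*c₂ - a₂*b₁*c₃ + a₂*b₃*c₁ + a₃*b₁*c₂ - a₃*b₂*c₁ := by
    simp [Matrix.det_fin_three]; ring
  have hO₁ : 2*Δ₂*b₁ + 2*Δ₃*c₁ - Δ₄*d₁ - a₁*Δ₁ = 0 := by
    rw [hΔ₁, hΔ₂, hΔ₃, hΔ₄, e₁, e₂, e₃, e₄]; ring
  have hO₂ : 2*Δ₂*b₂ + 2*Δ₃*c₂ - Δ₄*d₂ - a₂*Δ₁ = 0 := by
    rw [hΔ₁, hΔ₂, hΔ₃, hΔ₄, e₁, e₂, e₃, e₄]; ring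
  have hO₃ : 2*Δ₂*b₃ + 2*Δ₃*c₃ - Δ₄*d₃ - a₃*Δ₁ = 0 := by
    rw [hΔ₁, hΔ₂, hΔ₃, hΔ₄, e₁, e₂, e₃, e₄]; ring
  have hX0 : (Δ₂^2+Δ₃^2-Δ₁*Δ₄) = -((b₁^2+c₁^2-a₁*d₁)*((b₂^2+c₂^2-a₂*d₂)*(b₃^2+c₃^2-a₃*d₃)-(b₂*b₃+c₂*c₃-(a₂*d₃+a₃*d₂)/2)^2) - (b₁*b₂+c₁*c₂-(a₁*d₂+a₂*d₁)/2)*((b₁*b₂+c₁*c₂-(a₁*d₂+a₂*d₁)/2)*(b₃^2+c₃^2-a₃*d₃)-(b₂*b₃+c₂*c₃-(a₂*d₃+a₃*d₂)/2)*(b₃*b₁+c₃*c₁-(a₃*d₁+a₁*d₃)/2)) + (b₃*b₁+c₃*c₁-(a₃*d₁+a₁*d₃)/2)*((b₁*b₂+c₁*c₂-(a₁*d₂+a₂*d₁)/2)*(b₂*b₃+c₂*c₃-(a₂*d₃+a₃*d₂)/2)-(b₂^2+c₂^2-a₂*d₂)*(b₃*b₁+c₃*c₁-(a₃*d₁+a₁*d₃)/2)))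 := by
    rw [hΔ₁, hΔ₂, hΔ₃, hΔ₄, e₁, e₂, e₃, e₄]; ring
  have hX : (Δ₂^2+Δ₃^2-Δ₁*Δ₄) = -(1+2*(1-2*Q₁)*(1-2*Q₂)*(1-2*Q₃)-(1-2*Q₁)^2-(1-2*Q₂)^2-(1-2*Q₃)^2) := by
    linear_combination hX0 - (((b₂^2+c₂^2-a₂*d₂)*(b₃^2+c₃^2-a₃*d₃)-(b₂*b₃+c₂*c₃-(a₂*d₃+a₃*d₂)/2)^2)*h₁ + ((b₃^2+c₃^2-a₃*d₃)-(b₃*b₁+c₃*c₁-(a₃*d₁+a₁*d₃)/2)^2)*h₂ + (1-(b₁*b₂+c₁*c₂-(a₁*d₂+a₂*d₁)/2)^2)*h₃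
      + ((2*(b₂*b₃+c₂*c₃-(a₂*d₃+a₃*d₂)/2)*(b₃*b₁+c₃*c₁-(a₃*d₁+a₁*d₃)/2)-((b₁*b₂+c₁*c₂-(a₁*d₂+a₂*d₁)/2)+(1-2*Q₁)))/2)*hB₁
      + ((2*(1-2*Q₁)*(b₃*b₁+c₃*c₁-(a₃*d₁+a₁*d₃)/2)-((b₂*b₃+c₂*c₃-(a₂*d₃+a₃*d₂)/2)+(1-2*Q₂)))/2)*hB₂
      + ((2*(1-2*Q₁)*(1-2*Q₂)-((b₃*b₁+c₃*c₁-(a₃*d₁+a₁*d₃)/2)+(1-2*Q₃)))/2)*hB₃)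
  subst hv₁ hv₂ hv₃ hU
  have key₀ : (b₁*(Q₂*(Q₂-Q₃-Q₁)) + b₂*(Q₃*(Q₃-Q₁-Q₂)) + b₃*(Q₁*(Q₁-Q₂-Q₃)) + ε*Δ₂*r)^2 + (c₁*(Q₂*(Q₂-Q₃-Q₁)) + c₂*(Q₃*(Q₃-Q₁-Q₂)) + c₃*(Q₁*(Q₁-Q₂-Q₃)) + ε*Δ₃*r)^2 - (a₁*(Q₂*(Q₂-Q₃-Q₁)) + a₂*(Q₃*(Q₃-Q₁-Q₂)) + a₃*(Q₁*(Q₁-Q₂-Q₃)) + ε*Δ₄*r)*(d₁*(Q₂*(Q₂-Q₃-Q₁)) + d₂*(Q₃*(Q₃-Q₁-Q₂)) + d₃*(Q₁*(Q₁-Q₂-Q₃)) + ε*Δ₁*r) = (Q₁*(Q₁-2*Q₂) + Q₂*(Q₂-2*Q₃) + Q₃*(Q₃-2*Q₁) + 4*Q₁*Q₂*Q₃)^2 := by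
    linear_combination (Q₂*(Q₂-Q₃-Q₁))^2*h₁ + (Q₃*(Q₃-Q₁-Q₂))^2*h₂ + (Q₁*(Q₁-Q₂-Q₃))^2*h₃
      + ((Q₂*(Q₂-Q₃-Q₁))*(Q₃*(Q₃-Q₁-Q₂)))*hB₁ + ((Q₃*(Q₃-Q₁-Q₂))*(Q₁*(Q₁-Q₂-Q₃)))*hB₂ + ((Q₁*(Q₁-Q₂-Q₃))*(Q₂*(Q₂-Q₃-Q₁)))*hB₃
      + (ε*r)*((Q₂*(Q₂-Q₃-Q₁))*hO₁ + (Q₃*(Q₃-Q₁-Q₂))*hO₂ + (Q₁*(Q₁-Q₂-Q₃))*hO₃)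
      + (r^2*(Δ₂^2+Δ₃^2-Δ₁*Δ₄))*hε2 + (Δ₂^2+Δ₃^2-Δ₁*Δ₄)*hr2 + (Q₁*Q₂*Q₃)*hX
  have key₁ : 2*(b₁*(Q₂*(Q₂-Q₃-Q₁)) + b₂*(Q₃*(Q₃-Q₁-Q₂)) + b₃*(Q₁*(Q₁-Q₂-Q₃)) + ε*Δ₂*r)*b₁ + 2*(c₁*(Q₂*(Q₂-Q₃-Q₁)) + c₂*(Q₃*(Q₃-Q₁-Q₂)) + c₃*(Q₁*(Q₁-Q₂-Q₃)) + ε*Δ₃*r)*c₁ - (a₁*(Q₂*(Q₂-Q₃-Q₁)) + a₂*(Q₃*(Q₃-Q₁-Q₂)) + a₃*(Q₁*(Q₁-Q₂-Q₃)) + ε*Δ₄*r)*d₁ - a₁*(d₁*(Q₂*(Q₂-Q₃-Q₁)) + d₂*(Q₃*(Q₃-Q₁-Q₂)) + d₃*(Q₁*(Q₁-Q₂-Q₃)) + ε*Δ₁*r) = 2*(Q₁*(Q₁-2*Q₂) + Q₂*(Q₂-2*Q₃) + Q₃*(Q₃-2*Q₁) + 4*Q₁*Q₂*Q₃) := by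
    linear_combination 2*(Q₂*(Q₂-Q₃-Q₁))*h₁ + (Q₃*(Q₃-Q₁-Q₂))*hB₁ + (Q₁*(Q₁-Q₂-Q₃))*hB₃ + (ε*r)*hO₁
  have key₂ : 2*(b₁*(Q₂*(Q₂-Q₃-Q₁)) + b₂*(Q₃*(Q₃-Q₁-Q₂)) + b₃*(Q₁*(Q₁-Q₂-Q₃)) + ε*Δ₂*r)*b₂ + 2*(c₁*(Q₂*(Q₂-Q₃-Q₁)) + c₂*(Q₃*(Q₃-Q₁-Q₂)) + c₃*(Q₁*(Q₁-Q₂-Q₃)) + ε*Δ₃*r)*c₂ - (a₁*(Q₂*(Q₂-Q₃-Q₁)) + a₂*(Q₃*(Q₃-Q₁-Q₂)) + a₃*(Q₁*(Q₁-Q₂-Q₃)) + ε*Δ₄*r)*d₂ - a₂*(d₁*(Q₂*(Q₂-Q₃-Q₁)) + d₂*(Q₃*(Q₃-Q₁-Q₂)) + d₃*(Q₁*(Q₁-Q₂-Q₃)) + ε*Δ₁*r) = 2*(Q₁*(Q₁-2*Q₂) + Q₂*(Q₂-2*Q₃) + Q₃*(Q₃-2*Q₁) + 4*Q₁*Q₂*Q₃)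 := by
    linear_combination 2*(Q₃*(Q₃-Q₁-Q₂))*h₂ + (Q₂*(Q₂-Q₃-Q₁))*hB₁ + (Q₁*(Q₁-Q₂-Q₃))*hB₂ + (ε*r)*hO₂
  have key₃ : 2*(b₁*(Q₂*(Q₂-Q₃-Q₁)) + b₂*(Q₃*(Q₃-Q₁-Q₂)) + b₃*(Q₁*(Q₁-Q₂-Q₃)) + ε*Δ₂*r)*b₃ + 2*(c₁*(Q₂*(Q₂-Q₃-Q₁)) + c₂*(Q₃*(Q₃-Q₁-Q₂)) + c₃*(Q₁*(Q₁-Q₂-Q₃)) + ε*Δ₃*r)*c₃ - (a₁*(Q₂*(Q₂-Q₃-Q₁)) + a₂*(Q₃*(Q₃-Q₁-Q₂)) + a₃*(Q₁*(Q₁-Q₂-Q₃)) + ε*Δ₄*r)*d₃ - a₃*(d₁*(Q₂*(Q₂-Q₃-Q₁)) + d₂*(Q₃*(Q₃-Q₁-Q₂)) + d₃*(Q₁*(Q₁-Q₂-Q₃)) + ε*Δ₁*r) = 2*(Q₁*(Q₁-2*Q₂) + Q₂*(Q₂-2*Q₃) + Q₃*(Q₃-2*Q₁) + 4*Q₁*Q₂*Q₃)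 := by
    linear_combination 2*(Q₁*(Q₁-Q₂-Q₃))*h₃ + (Q₃*(Q₃-Q₁-Q₂))*hB₂ + (Q₂*(Q₂-Q₃-Q₁))*hB₃ + (ε*r)*hO₃
  refine ⟨?_, ?_, ?_, ?_⟩
  · have hdiv : ∀ (A B C D u : ℝ), (B/u)^2+(C/u)^2-(A/u)*(D/u) = (B^2+C^2-A*D)/u^2 := by
      intros; ring
    rw [ha₀, hb₀, hc₀, hd₀, hdiv, key₀, div_self (pow_ne_zero 2 hU0)]
  · rw [ha₀, hb₀, hc₀, hd₀]
    have hk : ∀ (A B C D u : ℝ), u ≠ 0 → 2*B*b₁+2*C*c₁-A*d₁-a₁*D = 2*u → 2*(B/u)*b₁+2*(C/u)*c₁-(A/u)*d₁-a₁*(D/u) = 2 := by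
      intro A B C D u hu h; field_simp; linear_combination h
    exact hk _ _ _ _ _ hU0 key₁
  · rw [ha₀, hb₀, hc₀, hd₀]
    have hk : ∀ (A B C D u : ℝ), u ≠ 0 → 2*B*b₂+2*C*c₂-A*d₂-a₂*D = 2*u → 2*(B/u)*b₂+2*(C/u)*c₂-(A/u)*d₂-a₂*(D/u) = 2 := by
      intro A B C D u hu h; field_simp; linear_combination h
    exact hk _ _ _ _ _ hU0 key₂
  · rw [ha₀, hb₀, hc₀, hd₀]
    have hk : ∀ (A B C D u : ℝ), u ≠ 0 → 2*B*b₃+2*C*c₃-A*d₃-a₃*D = 2*u → 2*(B/u)*b₃+2*(C/u)*c₃-(A/u)*d₃-a₃*(D/u) = 2 := by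
      intro A B C D u hu h; field_simp; linear_combination h
    exact hk _ _ _ _ _ hU0 key₃
end

section
/- Let K₁, K₂, K₃ be three normalized circle quadruples with a₁ = a₂ = a₃ = 0 (three oriented straight lines, so b_i² + c_i² = 1), and suppose Δ₁ ≠ 0 and Δ_bc ≠ 0. Define a₀ = 2Δ_bc/Δ₁, b₀ = −Δ_cd/Δ₁, c₀ = Δ_bd/Δ₁, d₀ = (b₀² + c₀² − 1)/a₀. Then the quadruple K₀ = (a₀,b₀,c₀,d₀) is normalized and for each i ∈ {1,2,3}: 2b₀b_i + 2c₀c_i − a₀d_i = 2 (i.e., Q(K₀,K_i) = 0, so K₀ is the oriented circle tangent to the three given lines). -/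
theorem stmt_6
    (a₁ b₁ c₁ d₁ a₂ b₂ c₂ d₂ a₃ b₃ c₃ d₃ : ℝ)
    (h₁ : b₁^2 + c₁^2 - a₁*d₁ = 1)
    (h₂ : b₂^2 + c₂^2 - a₂*d₂ = 1)
    (h₃ : b₃^2 + c₃^2 - a₃*d₃ = 1)
    (ha₁ : a₁ = 0) (ha₂ : a₂ = 0) (ha₃ : a₃ = 0)
    (Δ₁ Δbc Δbd Δcd : ℝ)
    (hΔ₁ : Δ₁ = -Matrix.det !![b₁,c₁,d₁; b₂,c₂,d₂; b₃,c₃,d₃])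
    (hΔbc : Δbc = Matrix.det !![b₁,c₁,1; b₂,c₂,1; b₃,c₃,1])
    (hΔbd : Δbd = Matrix.det !![b₁,d₁,1; b₂,d₂,1; b₃,d₃,1])
    (hΔcd : Δcd = Matrix.det !![c₁,d₁,1; c₂,d₂,1; c₃,d₃,1])
    (hΔ₁0 : Δ₁ ≠ 0) (hΔbc0 : Δbc ≠ 0)
    (a₀ b₀ c₀ d₀ : ℝ)
    (ha₀ : a₀ = 2*Δbc/Δ₁)
    (hb₀ : b₀ = -Δcd/Δ₁)
    (hc₀ : c₀ = Δbd/Δ₁)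
    (hd₀ : d₀ = (b₀^2 + c₀^2 - 1)/a₀) :
    b₀^2 + c₀^2 - a₀*d₀ = 1 ∧
    2*b₀*b₁ + 2*c₀*c₁ - a₀*d₁ = 2 ∧
    2*b₀*b₂ + 2*c₀*c₂ - a₀*d₂ = 2 ∧
    2*b₀*b₃ + 2*c₀*c₃ - a₀*d₃ = 2 := by
  rw [Matrix.det_fin_three] at hΔ₁ hΔbc hΔbd hΔcd
  norm_num [Matrix.cons_val_zero, Matrix.cons_val_one, Matrix.head_cons,
    Matrix.cons_val_two, Matrix.tail_cons, Matrix.head_fin_const, Matrix.vecHead, Matrix.vecTail, Function.comp] at hΔ₁ hΔbc hΔbd hΔcd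
  have ha0 : a₀ ≠ 0 := by
    rw [ha₀]
    exact div_ne_zero (by simpa using hΔbc0) hΔ₁0
  refine ⟨?_, ?_, ?_, ?_⟩
  · rw [hd₀]; field_simp; ring
  all_goals
    subst ha₀ hb₀ hc₀
    field_simp
    subst hΔ₁ hΔbc hΔbd hΔcd
    ring
end

section
/- Let K₁, K₂, K₃ be three normalized circle quadruples with Q₁ = Q₂ = Q₃ = 1 (pairwise counter-tangent oriented circles). Then U = 1, V = −(a₁+a₂+a₃), W = (a₁+a₂+a₃)² − 4(a₁a₂+a₂a₃+a₃a₁), and Δ₄² = 4(a₁a₂+a₂a₃+a₃a₁); in particular a₁a₂+a₂a₃+a₃a₁ ≥ 0, and the two roots of the equation U·x² − 2V·x + W = 0 are x = −(a₁+a₂+a₃) ± 2√(a₁a₂+a₂a₃+a₃a₁) (the oriented Descartes circle formula). -/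
theorem stmt_8
    (a₁ b₁ c₁ d₁ a₂ b₂ c₂ d₂ a₃ b₃ c₃ d₃ : ℝ)
    (h₁ : b₁^2 + c₁^2 - a₁*d₁ = 1)
    (h₂ : b₂^2 + c₂^2 - a₂*d₂ = 1)
    (h₃ : b₃^2 + c₃^2 - a₃*d₃ = 1)
    (Q₁ Q₂ Q₃ : ℝ)
    (hQ₁ : 4*Q₁ = 2 + a₁*d₂ + a₂*d₁ - 2*(b₁*b₂ + c₁*c₂))
    (hQ₂ : 4*Q₂ = 2 + a₂*d₃ + a₃*d₂ - 2*(b₂*b₃ + c₂*c₃))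
    (hQ₃ : 4*Q₃ = 2 + a₃*d₁ + a₁*d₃ - 2*(b₃*b₁ + c₃*c₁))
    (hq₁ : Q₁ = 1) (hq₂ : Q₂ = 1) (hq₃ : Q₃ = 1)
    (U : ℝ)
    (hU : U = Q₁*(Q₁-2*Q₂) + Q₂*(Q₂-2*Q₃) + Q₃*(Q₃-2*Q₁) + 4*Q₁*Q₂*Q₃)
    (v₁ v₂ v₃ V : ℝ)
    (hv₁ : v₁ = Q₁*(Q₁-Q₂-Q₃))
    (hv₂ : v₂ = Q₂*(Q₂-Q₃-Q₁))
    (hv₃ : v₃ = Q₃*(Q₃-Q₁-Q₂))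
    (hV : V = a₁*v₂ + a₂*v₃ + a₃*v₁)
    (W : ℝ)
    (hW : W = a₁*Q₂*(a₁*Q₂-2*a₂*Q₃) + a₂*Q₃*(a₂*Q₃-2*a₃*Q₁) + a₃*Q₁*(a₃*Q₁-2*a₁*Q₂))
    (Δ₄ : ℝ)
    (hΔ₄ : Δ₄ = Matrix.det !![a₁,b₁,c₁; a₂,b₂,c₂; a₃,b₃,c₃]) :
    U = 1 ∧
    V = -(a₁+a₂+a₃) ∧
    W = (a₁+a₂+a₃)^2 - 4*(a₁*a₂+a₂*a₃+a₃*a₁) ∧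
    Δ₄^2 = 4*(a₁*a₂+a₂*a₃+a₃*a₁) ∧
    0 ≤ a₁*a₂+a₂*a₃+a₃*a₁ ∧
    (∀ x : ℝ, U*x^2 - 2*V*x + W = 0 ↔
      (x = -(a₁+a₂+a₃) + 2*Real.sqrt (a₁*a₂+a₂*a₃+a₃*a₁) ∨
       x = -(a₁+a₂+a₃) - 2*Real.sqrt (a₁*a₂+a₂*a₃+a₃*a₁))) := by
  subst hq₁ hq₂ hq₃
  have E12 : a₁*d₂+a₂*d₁-2*(b₁*b₂+c₁*c₂) = 2 := by linarith
  have E23 : a₂*d₃+a₃*d₂-2*(b₂*b₃+c₂*c₃) = 2 := by linarith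
  have E31 : a₃*d₁+a₁*d₃-2*(b₃*b₁+c₃*c₁) = 2 := by linarith
  have hd : Δ₄ = a₁*(b₂*c₃ - b₃*c₂) - b₁*(a₂*c₃ - a₃*c₂) + c₁*(a₂*b₃ - a₃*b₂) := by
    rw [hΔ₄, Matrix.det_fin_three]; simp [Matrix.cons_val_zero, Matrix.cons_val_one]; ring
  have hUe : U = 1 := by rw [hU]; ring
  have hVe : V = -(a₁+a₂+a₃) := by rw [hV, hv₁, hv₂, hv₃]; ring
  have hWe : W = (a₁+a₂+a₃)^2 - 4*(a₁*a₂+a₂*a₃+a₃*a₁) := by rw [hW]; ring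
  have key : Δ₄^2 = 4*(a₁*a₂+a₂*a₃+a₃*a₁) := by
    linear_combination (Δ₄ + (a₁*(b₂*c₃ - b₃*c₂) - b₁*(a₂*c₃ - a₃*c₂) + c₁*(a₂*b₃ - a₃*b₂)))*hd + (1)*a₃*a₃*h₁ + (2)*a₂*a₃*h₁ + (1)*a₂*a₂*h₁ + (-1)*a₃*a₃*E12 + (1)*a₁*a₃*E12 + (1)*a₂*a₃*E12 + (1)*a₁*a₂*E12 + (1)*a₂*a₃*E31 + (1)*a₁*a₃*E31 + (-1)*a₂*a₂*E31 + (1)*a₁*a₂*E31 + (1)*a₃*a₃*h₂ + (1)*a₂*a₃*E23 + (1)*a₁*a₃*E23 + (2)*a₁*a₃*h₂ + (1)*a₁*a₁*h₂ + (1)*a₁*a₂*E23 + (-1)*a₁*a₁*E23 + (1)*a₂*a₂*h₃ + (2)*a₁*a₂*h₃ + (1)*a₁*a₁*h₃ + (1)*a₃*a₃*(b₂^2+c₂^2-a₂*d₂-1)*h₁ + (1)*a₂*a₃*(b₁^2+c₁^2-a₁*d₁-1)*E23 + (-1/4)*a₃*a₃*(a₁*d₂+a₂*d₁-2*(b₁*b₂+c₁*c₂)-2)*E12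 + (1/2)*a₁*a₃*(a₂*d₃+a₃*d₂-2*(b₂*b₃+c₂*c₃)-2)*E12 + (1/2)*a₂*a₃*(a₃*d₁+a₁*d₃-2*(b₃*b₁+c₃*c₁)-2)*E12 + (1)*a₁*a₃*(b₂^2+c₂^2-a₂*d₂-1)*E31 + (1)*a₂*a₂*(b₃^2+c₃^2-a₃*d₃-1)*h₁ + (1)*a₁*a₂*(b₃^2+c₃^2-a₃*d₃-1)*E12 + (-1/4)*a₂*a₂*(a₃*d₁+a₁*d₃-2*(b₃*b₁+c₃*c₁)-2)*E31 + (1/2)*a₁*a₂*(a₃*d₁+a₁*d₃-2*(b₃*b₁+c₃*c₁)-2)*E23 + (1)*a₁*a₁*(b₃^2+c₃^2-a₃*d₃-1)*h₂ + (-1/4)*a₁*a₁*(a₂*d₃+a₃*d₂-2*(b₂*b₃+c₂*c₃)-2)*E23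
  have hnn : 0 ≤ a₁*a₂+a₂*a₃+a₃*a₁ := by linarith [sq_nonneg Δ₄, key]
  refine ⟨hUe, hVe, hWe, key, hnn, ?_⟩
  intro x
  have hs : Real.sqrt (a₁*a₂+a₂*a₃+a₃*a₁) ^ 2 = a₁*a₂+a₂*a₃+a₃*a₁ := Real.sq_sqrt hnn
  rw [hUe, hVe, hWe]
  constructor
  · intro h
    have hfac : (x - (-(a₁+a₂+a₃) + 2*Real.sqrt (a₁*a₂+a₂*a₃+a₃*a₁))) *
        (x - (-(a₁+a₂+a₃) - 2*Real.sqrt (a₁*a₂+a₂*a₃+a₃*a₁))) = 0 := by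
      linear_combination h - 4*hs
    rcases mul_eq_zero.mp hfac with h' | h'
    · left; linarith
    · right; linarith
  · rintro (rfl | rfl) <;> linear_combination 4*hs
end

section
/- Let k₁, k₂, k₃ be nonzero reals and ℓ₁, ℓ₂, ℓ₃ ≥ 0 reals. Set Q₁ = ((k₁k₂ℓ₁)² − (k₂−k₁)²)/(4k₁k₂), Q₂ = ((k₂k₃ℓ₂)² − (k₃−k₂)²)/(4k₂k₃), Q₃ = ((k₃k₁ℓ₃)² − (k₁−k₃)²)/(4k₃k₁). Then P⊥ = k₁²k₂²k₃²·(1/16)·(ℓ₁+ℓ₂+ℓ₃)(ℓ₂+ℓ₃−ℓ₁)(ℓ₃+ℓ₁−ℓ₂)(ℓ₁+ℓ₂−ℓ₃); in particular P⊥ equals k₁²k₂²k₃² times the squared area (by Heron's formula) of a triangle with side lengths ℓ₁, ℓ₂, ℓ₃ whenever such a triangle exists. -/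
theorem stmt_9
    (k₁ k₂ k₃ ℓ₁ ℓ₂ ℓ₃ : ℝ)
    (hk₁ : k₁ ≠ 0) (hk₂ : k₂ ≠ 0) (hk₃ : k₃ ≠ 0)
    (hℓ₁ : 0 ≤ ℓ₁) (hℓ₂ : 0 ≤ ℓ₂) (hℓ₃ : 0 ≤ ℓ₃)
    (Q₁ Q₂ Q₃ : ℝ)
    (hQ₁ : Q₁ = ((k₁*k₂*ℓ₁)^2 - (k₂-k₁)^2)/(4*k₁*k₂))
    (hQ₂ : Q₂ = ((k₂*k₃*ℓ₂)^2 - (k₃-k₂)^2)/(4*k₂*k₃))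
    (hQ₃ : Q₃ = ((k₃*k₁*ℓ₃)^2 - (k₁-k₃)^2)/(4*k₃*k₁))
    (P : ℝ)
    (hP : P = k₁^2*(1-Q₂)*Q₂ + k₂^2*(1-Q₃)*Q₃ + k₃^2*(1-Q₁)*Q₁
        + k₁*k₂*(Q₁-Q₃-Q₂+2*Q₃*Q₂) + k₂*k₃*(Q₂-Q₁-Q₃+2*Q₁*Q₃)
        + k₃*k₁*(Q₃-Q₂-Q₁+2*Q₂*Q₁)) :
    P = k₁^2*k₂^2*k₃^2*((1/16)*(ℓ₁+ℓ₂+ℓ₃)*(ℓ₂+ℓ₃-ℓ₁)*(ℓ₃+ℓ₁-ℓ₂)*(ℓ₁+ℓ₂-ℓ₃)) := by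
  subst hQ₁ hQ₂ hQ₃ hP
  field_simp
  ring
end

section
/- For any three normalized circle quadruples K₁, K₂, K₃, one has 4·P⊥ = Δ₄², where P⊥ = a₁²(1−Q₂)Q₂ + a₂²(1−Q₃)Q₃ + a₃²(1−Q₁)Q₁ + a₁a₂(Q₁−Q₃−Q₂+2Q₃Q₂) + a₂a₃(Q₂−Q₁−Q₃+2Q₁Q₃) + a₃a₁(Q₃−Q₂−Q₁+2Q₂Q₁). In particular P⊥ ≥ 0. -/
set_option maxHeartbeats 2000000 in
theorem stmt_10
    (a₁ b₁ c₁ d₁ a₂ b₂ c₂ d₂ a₃ b₃ c₃ d₃ : ℝ)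
    (h₁ : b₁^2 + c₁^2 - a₁*d₁ = 1)
    (h₂ : b₂^2 + c₂^2 - a₂*d₂ = 1)
    (h₃ : b₃^2 + c₃^2 - a₃*d₃ = 1)
    (Q₁ Q₂ Q₃ : ℝ)
    (hQ₁ : 4*Q₁ = 2 + a₁*d₂ + a₂*d₁ - 2*(b₁*b₂ + c₁*c₂))
    (hQ₂ : 4*Q₂ = 2 + a₂*d₃ + a₃*d₂ - 2*(b₂*b₃ + c₂*c₃))
    (hQ₃ : 4*Q₃ = 2 + a₃*d₁ + a₁*d₃ - 2*(b₃*b₁ + c₃*c₁))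
    (Δ₄ : ℝ)
    (hΔ₄ : Δ₄ = Matrix.det !![a₁,b₁,c₁; a₂,b₂,c₂; a₃,b₃,c₃])
    (P : ℝ)
    (hP : P = a₁^2*(1-Q₂)*Q₂ + a₂^2*(1-Q₃)*Q₃ + a₃^2*(1-Q₁)*Q₁
        + a₁*a₂*(Q₁-Q₃-Q₂+2*Q₃*Q₂) + a₂*a₃*(Q₂-Q₁-Q₃+2*Q₁*Q₃)
        + a₃*a₁*(Q₃-Q₂-Q₁+2*Q₂*Q₁)) :
    4*P = Δ₄^2 ∧ 0 ≤ P := by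
  obtain rfl : Q₁ = (2 + a₁*d₂ + a₂*d₁ - 2*(b₁*b₂ + c₁*c₂))/4 := by linarith
  obtain rfl : Q₂ = (2 + a₂*d₃ + a₃*d₂ - 2*(b₂*b₃ + c₂*c₃))/4 := by linarith
  obtain rfl : Q₃ = (2 + a₃*d₁ + a₁*d₃ - 2*(b₃*b₁ + c₃*c₁))/4 := by linarith
  subst hP
  rw [hΔ₄]
  have hmain : 4*(a₁^2*(1-((2 + a₂*d₃ + a₃*d₂ - 2*(b₂*b₃ + c₂*c₃))/4))*((2 + a₂*d₃ + a₃*d₂ - 2*(b₂*b₃ + c₂*c₃))/4)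
      + a₂^2*(1-((2 + a₃*d₁ + a₁*d₃ - 2*(b₃*b₁ + c₃*c₁))/4))*((2 + a₃*d₁ + a₁*d₃ - 2*(b₃*b₁ + c₃*c₁))/4)
      + a₃^2*(1-((2 + a₁*d₂ + a₂*d₁ - 2*(b₁*b₂ + c₁*c₂))/4))*((2 + a₁*d₂ + a₂*d₁ - 2*(b₁*b₂ + c₁*c₂))/4)
      + a₁*a₂*(((2 + a₁*d₂ + a₂*d₁ - 2*(b₁*b₂ + c₁*c₂))/4)-((2 + a₃*d₁ + a₁*d₃ - 2*(b₃*b₁ + c₃*c₁))/4)-((2 + a₂*d₃ + a₃*d₂ - 2*(b₂*b₃ + c₂*c₃))/4)+2*((2 + a₃*d₁ + a₁*d₃ - 2*(b₃*b₁ + c₃*c₁))/4)*((2 + a₂*d₃ + a₃*d₂ - 2*(b₂*b₃ + c₂*c₃))/4))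
      + a₂*a₃*(((2 + a₂*d₃ + a₃*d₂ - 2*(b₂*b₃ + c₂*c₃))/4)-((2 + a₁*d₂ + a₂*d₁ - 2*(b₁*b₂ + c₁*c₂))/4)-((2 + a₃*d₁ + a₁*d₃ - 2*(b₃*b₁ + c₃*c₁))/4)+2*((2 + a₁*d₂ + a₂*d₁ - 2*(b₁*b₂ + c₁*c₂))/4)*((2 + a₃*d₁ + a₁*d₃ - 2*(b₃*b₁ + c₃*c₁))/4))
      + a₃*a₁*(((2 + a₃*d₁ + a₁*d₃ - 2*(b₃*b₁ + c₃*c₁))/4)-((2 + a₂*d₃ + a₃*d₂ - 2*(b₂*b₃ + c₂*c₃))/4)-((2 + a₁*d₂ + a₂*d₁ - 2*(b₁*b₂ + c₁*c₂))/4)+2*((2 + a₂*d₃ + a₃*d₂ - 2*(b₂*b₃ + c₂*c₃))/4)*((2 + a₁*d₂ + a₂*d₁ - 2*(b₁*b₂ + c₁*c₂))/4)))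
      = (a₁*(b₂*c₃ - c₂*b₃) - b₁*(a₂*c₃ - c₂*a₃) + c₁*(a₂*b₃ - b₂*a₃))^2 := by
    linear_combination
      (-a₃^2 - a₂*d₂*a₃^2 + 2*a₂*c₂*a₃*c₃ + 2*a₂*b₂*a₃*b₃ - a₂^2 - a₂^2*a₃*d₃) * h₁
      + (-c₁^2*a₃^2 - b₁^2*a₃^2 + 2*a₁*c₁*a₃*c₃ + 2*a₁*b₁*a₃*b₃ - a₁^2 - a₁^2*a₃*d₃) * h₂
      + (-c₁^2*a₂^2 - b₁^2*a₂^2 + 2*a₁*c₁*a₂*c₂ + 2*a₁*b₁*a₂*b₂ - a₁^2*c₂^2 - a₁^2*b₂^2) * h₃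
  have hdet : Matrix.det !![a₁,b₁,c₁; a₂,b₂,c₂; a₃,b₃,c₃]
      = a₁*(b₂*c₃ - c₂*b₃) - b₁*(a₂*c₃ - c₂*a₃) + c₁*(a₂*b₃ - b₂*a₃) := by
    simp [Matrix.det_fin_three]; ring
  rw [hdet]
  constructor
  · exact hmain
  · nlinarith [sq_nonneg (a₁*(b₂*c₃ - c₂*b₃) - b₁*(a₂*c₃ - c₂*a₃) + c₁*(a₂*b₃ - b₂*a₃))]
end

section
/- Let K₁ and K* be normalized circle quadruples, Q* = Q(K₁,K*), and define K₂ componentwise by K₂ = 2(1−2Q*)·K* − K₁, i.e., (a₂,b₂,c₂,d₂) = (2(1−2Q*)a*−a₁, 2(1−2Q*)b*−b₁, 2(1−2Q*)c*−c₁, 2(1−2Q*)d*−d₁). Then K₂ is a normalized circle quadruple (it represents the image of the circle K₁ under inversion in the circle K*). -/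
theorem stmt_12
    (a₁ b₁ c₁ d₁ a b c d : ℝ)
    (h₁ : b₁^2 + c₁^2 - a₁*d₁ = 1)
    (h : b^2 + c^2 - a*d = 1)
    (Q : ℝ)
    (hQ : 4*Q = 2 + a₁*d + a*d₁ - 2*(b₁*b + c₁*c))
    (a₂ b₂ c₂ d₂ : ℝ)
    (ha₂ : a₂ = 2*(1-2*Q)*a - a₁)
    (hb₂ : b₂ = 2*(1-2*Q)*b - b₁)
    (hc₂ : c₂ = 2*(1-2*Q)*c - c₁)
    (hd₂ : d₂ = 2*(1-2*Q)*d - d₁) :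
    b₂^2 + c₂^2 - a₂*d₂ = 1 := by
  subst ha₂ hb₂ hc₂ hd₂
  linear_combination (4*(1-2*Q)^2) * h + h₁ - (2*(1-2*Q)) * hQ
end

section
/- For any three normalized circle quadruples K₁, K₂, K₃ and any real t, one has (V·t)² − U·W′ = Δ₄²·D, where W′ = W·t² − (1/4)·Δ₄²·(1−t²) and D = (1/4)·U·(1−t²) + Q₁Q₂Q₃·t². (Here t plays the role of cos Ψ₀ in the isogonal Apollonius problem.) -/
set_option maxHeartbeats 1600000 in
theorem aux_key (A1 A2 A3 D1 D2 D3 s12 s23 s31 Dsq : ℝ)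
    (hDsq : Dsq = ((A1^2+1+A1*D1)*((A2^2+1+A2*D2)*(A3^2+1+A3*D3)-(A2*A3+s23)^2) - (A1*A2+s12)*((A1*A2+s12)*(A3^2+1+A3*D3)-(A2*A3+s23)*(A3*A1+s31)) + (A3*A1+s31)*((A1*A2+s12)*(A2*A3+s23)-(A2^2+1+A2*D2)*(A3*A1+s31))))
    (hg : ((1+A1*D1)*((1+A2*D2)*(1+A3*D3)-s23^2) - s12*(s12*(1+A3*D3)-s23*s31) + s31*(s12*s23-(1+A2*D2)*s31)) = 0) :
    (A1*(((2 + A2*D3 + A3*D2 - 2*s23)/4)*(((2 + A2*D3 + A3*D2 - 2*s23)/4)-((2 + A3*D1 + A1*D3 - 2*s31)/4)-((2 + A1*D2 + A2*D1 - 2*s12)/4))) + A2*(((2 + A3*D1 + A1*D3 - 2*s31)/4)*(((2 + A3*D1 + A1*D3 - 2*s31)/4)-((2 + A1*D2 + A2*D1 - 2*s12)/4)-((2 + A2*D3 + A3*D2 - 2*s23)/4))) + A3*(((2 + A1*D2 + A2*D1 - 2*s12)/4)*(((2 + A1*D2 + A2*D1 - 2*s12)/4)-((2 + A2*D3 + A3*D2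 - 2*s23)/4)-((2 + A3*D1 + A1*D3 - 2*s31)/4))))^2 - (((2 + A1*D2 + A2*D1 - 2*s12)/4)*(((2 + A1*D2 + A2*D1 - 2*s12)/4)-2*((2 + A2*D3 + A3*D2 - 2*s23)/4)) + ((2 + A2*D3 + A3*D2 - 2*s23)/4)*(((2 + A2*D3 + A3*D2 - 2*s23)/4)-2*((2 + A3*D1 + A1*D3 - 2*s31)/4)) + ((2 + A3*D1 + A1*D3 - 2*s31)/4)*(((2 + A3*D1 + A1*D3 - 2*s31)/4)-2*((2 + A1*D2 + A2*D1 - 2*s12)/4)) + 4*((2 + A1*D2 + A2*D1 - 2*s12)/4)*((2 + A2*D3 + A3*D2 - 2*s23)/4)*((2 + A3*D1 + A1*D3 - 2*s31)/4))*(A1*((2 + A2*D3 + A3*D2 - 2*s23)/4)*(A1*((2 + A2*D3 + A3*D2 - 2*s23)/4)-2*A2*((2 + A3*D1 + A1*D3 - 2*s31)/4)) + A2*((2 + A3*D1 + A1*D3 - 2*s31)/4)*(A2*((2 + A3*D1 + A1*D3 - 2*s31)/4)-2*A3*((2 + A1*D2 + A2*D1 - 2*s12)/4)) + A3*((2 +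 A1*D2 + A2*D1 - 2*s12)/4)*(A3*((2 + A1*D2 + A2*D1 - 2*s12)/4)-2*A1*((2 + A2*D3 + A3*D2 - 2*s23)/4))) = Dsq*(((2 + A1*D2 + A2*D1 - 2*s12)/4)*((2 + A2*D3 + A3*D2 - 2*s23)/4)*((2 + A3*D1 + A1*D3 - 2*s31)/4)) := by
  subst hDsq
  linear_combination (((((((-1/8) + ((1/8)*s31 + (1/8)*s23)) + (((-1/8)*s23*s31 + (1/8)*s12) + ((-1/8)*s12*s31 + (-1/8)*s12*s23))) + ((((1/8)*s12*s23*s31 + (-1/16)*A3*D2) + ((1/16)*A3*D2*s31 + (1/16)*A3*D2*s12)) + (((-1/16)*A3*D2*s12*s31 + (-1/16)*A3*D1) + ((1/16)*A3*D1*s23 + (1/16)*A3*D1*s12)))) + (((((-1/16)*A3*D1*s12*s23 + (-1/32)*A3^2*D1*D2) + ((1/32)*A3^2*D1*D2*s12 + (-1/16)*A2*D3)) + (((1/16)*A2*D3*s31 + (1/16)*A2*D3*s12) + ((-1/16)*A2*D3*s12*s31 + (-1/16)*A2*D1))) + ((((1/16)*A2*D1*s31 + (1/16)*A2*D1*s23)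 + ((-1/16)*A2*D1*s23*s31 + (-1/32)*A2*A3*D1*D3)) + (((1/32)*A2*A3*D1*D3*s12 + (-1/32)*A2*A3*D1*D2) + ((1/32)*A2*A3*D1*D2*s31 + (-1/32)*A2*A3*D1^2))))) + ((((((1/32)*A2*A3*D1^2*s23 + (-1/64)*A2*A3^2*D1^2*D2) + ((-1/32)*A2^2*D1*D3 + (1/32)*A2^2*D1*D3*s31)) + (((-1/64)*A2^2*A3*D1^2*D3 + (-1/16)*A1*D3) + ((1/16)*A1*D3*s23 + (1/16)*A1*D3*s12))) + ((((-1/16)*A1*D3*s12*s23 + (-1/16)*A1*D2) + ((1/16)*A1*D2*s31 + (1/16)*A1*D2*s23)) + (((-1/16)*A1*D2*s23*s31 + (-1/32)*A1*A3*D2*D3) + ((1/32)*A1*A3*D2*D3*s12 + (-1/32)*A1*A3*D2^2)))) + (((((1/32)*A1*A3*D2^2*s31 + (-1/32)*A1*A3*D1*D2) + ((1/32)*A1*A3*D1*D2*s23 + (-1/64)*A1*A3^2*D1*D2^2)) + (((-1/32)*A1*A2*D3^2 + (1/32)*A1*A2*D3^2*s12) + ((-1/32)*A1*A2*D2*D3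 + (1/32)*A1*A2*D2*D3*s31))) + ((((-1/32)*A1*A2*D1*D3 + (1/32)*A1*A2*D1*D3*s23) + ((-1/32)*A1*A2*A3*D1*D2*D3 + (-1/64)*A1*A2^2*D1*D3^2)) + (((-1/32)*A1^2*D2*D3 + (1/32)*A1^2*D2*D3*s23) + ((-1/64)*A1^2*A3*D2^2*D3 + (-1/64)*A1^2*A2*D2*D3^2))))))) * hg

set_option maxHeartbeats 1600000 in
theorem stmt_13
    (a₁ b₁ c₁ d₁ a₂ b₂ c₂ d₂ a₃ b₃ c₃ d₃ : ℝ)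
    (h₁ : b₁^2 + c₁^2 - a₁*d₁ = 1)
    (h₂ : b₂^2 + c₂^2 - a₂*d₂ = 1)
    (h₃ : b₃^2 + c₃^2 - a₃*d₃ = 1)
    (Q₁ Q₂ Q₃ : ℝ)
    (hQ₁ : 4*Q₁ = 2 + a₁*d₂ + a₂*d₁ - 2*(b₁*b₂ + c₁*c₂))
    (hQ₂ : 4*Q₂ = 2 + a₂*d₃ + a₃*d₂ - 2*(b₂*b₃ + c₂*c₃))
    (hQ₃ : 4*Q₃ = 2 + a₃*d₁ + a₁*d₃ - 2*(b₃*b₁ + c₃*c₁))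
    (U : ℝ)
    (hU : U = Q₁*(Q₁-2*Q₂) + Q₂*(Q₂-2*Q₃) + Q₃*(Q₃-2*Q₁) + 4*Q₁*Q₂*Q₃)
    (v₁ v₂ v₃ V : ℝ)
    (hv₁ : v₁ = Q₁*(Q₁-Q₂-Q₃))
    (hv₂ : v₂ = Q₂*(Q₂-Q₃-Q₁))
    (hv₃ : v₃ = Q₃*(Q₃-Q₁-Q₂))
    (hV : V = a₁*v₂ + a₂*v₃ + a₃*v₁)
    (W : ℝ)
    (hW : W = a₁*Q₂*(a₁*Q₂-2*a₂*Q₃) + a₂*Q₃*(a₂*Q₃-2*a₃*Q₁) + a₃*Q₁*(a₃*Q₁-2*a₁*Q₂))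
    (Δ₄ : ℝ)
    (hΔ₄ : Δ₄ = Matrix.det !![a₁,b₁,c₁; a₂,b₂,c₂; a₃,b₃,c₃])
    (t : ℝ)
    (W' D : ℝ)
    (hW' : W' = W*t^2 - (1/4)*Δ₄^2*(1-t^2))
    (hD : D = (1/4)*U*(1-t^2) + Q₁*Q₂*Q₃*t^2) :
    (V*t)^2 - U*W' = Δ₄^2*D := by
  obtain ⟨s12, hs12⟩ : ∃ x : ℝ, b₁*b₂ + c₁*c₂ = x := ⟨_, rfl⟩
  obtain ⟨s23, hs23⟩ : ∃ x : ℝ, b₂*b₃ + c₂*c₃ = x := ⟨_, rfl⟩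
  obtain ⟨s31, hs31⟩ : ∃ x : ℝ, b₃*b₁ + c₃*c₁ = x := ⟨_, rfl⟩
  rw [hs12] at hQ₁
  rw [hs23] at hQ₂
  rw [hs31] at hQ₃
  have eQ₁ : Q₁ = (2 + a₁*d₂ + a₂*d₁ - 2*s12)/4 := by linarith
  have eQ₂ : Q₂ = (2 + a₂*d₃ + a₃*d₂ - 2*s23)/4 := by linarith
  have eQ₃ : Q₃ = (2 + a₃*d₁ + a₁*d₃ - 2*s31)/4 := by linarith
  have hΔsq : Δ₄^2 = ((a₁^2+1+a₁*d₁)*((a₂^2+1+a₂*d₂)*(a₃^2+1+a₃*d₃)-(a₂*a₃+s23)^2) - (a₁*a₂+s12)*((a₁*a₂+s12)*(a₃^2+1+a₃*d₃)-(a₂*a₃+s23)*(a₃*a₁+s31)) + (a₃*a₁+s31)*((a₁*a₂+s12)*(a₂*a₃+s23)-(a₂^2+1+a₂*d₂)*(a₃*a₁+s31))) := by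
    rw [hΔ₄, ← hs12, ← hs23, ← hs31]
    simp [Matrix.det_fin_three]
    linear_combination ((((1 + (1*a₃*d₃ + 1*a₃^2)) + ((-1)*c₂^2*c₃^2 + ((-2)*b₂*c₂*b₃*c₃ + (-1)*b₂^2*b₃^2))) + ((1*a₂*d₂ + (1*a₂*d₂*a₃*d₃ + 1*a₂*d₂*a₃^2)) + (((-2)*a₂*c₂*a₃*c₃ + (-2)*a₂*b₂*a₃*b₃) + (1*a₂^2 + 1*a₂^2*a₃*d₃))))) * h₁ + ((((1*c₁^2 + ((-1)*c₁^2*c₃^2 + 1*c₁^2*a₃*d₃)) + (1*c₁^2*a₃^2 + ((-2)*b₁*c₁*b₃*c₃ + 1*b₁^2))) + (((-1)*b₁^2*b₃^2 + (1*b₁^2*a₃*d₃ + 1*b₁^2*a₃^2)) + (((-2)*a₁*c₁*a₃*c₃ + (-2)*a₁*b₁*a₃*b₃) + (1*a₁^2 + 1*a₁^2*a₃*d₃))))) * h₂ + ((((1*c₁^2*b₂^2 + 1*c₁^2*a₂^2) + ((-2)*b₁*c₁*b₂*c₂ + 1*b₁^2*c₂^2)) + ((1*b₁^2*a₂^2 +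 (-2)*a₁*c₁*a₂*c₂) + ((-2)*a₁*b₁*a₂*b₂ + (1*a₁^2*c₂^2 + 1*a₁^2*b₂^2))))) * h₃
  have hgr : ((1+a₁*d₁)*((1+a₂*d₂)*(1+a₃*d₃)-s23^2) - s12*(s12*(1+a₃*d₃)-s23*s31) + s31*(s12*s23-(1+a₂*d₂)*s31)) = 0 := by
    rw [← hs12, ← hs23, ← hs31]
    linear_combination ((((-1) + ((-1)*a₃*d₃ + 1*c₂^2*c₃^2)) + ((2*b₂*c₂*b₃*c₃ + 1*b₂^2*b₃^2) + ((-1)*a₂*d₂ + (-1)*a₂*d₂*a₃*d₃)))) * h₁ + ((((-1)*c₁^2 + (1*c₁^2*c₃^2 + (-1)*c₁^2*a₃*d₃)) + ((2*b₁*c₁*b₃*c₃ + (-1)*b₁^2) + (1*b₁^2*b₃^2 + (-1)*b₁^2*a₃*d₃)))) * h₂ + (((-1)*c₁^2*b₂^2 + (2*b₁*c₁*b₂*c₂ + (-1)*b₁^2*c₂^2))) * h₃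
  have key := aux_key a₁ a₂ a₃ d₁ d₂ d₃ s12 s23 s31 (Δ₄^2) hΔsq hgr
  subst eQ₁ eQ₂ eQ₃ hv₁ hv₂ hv₃ hV hU hW hW' hD
  linear_combination (t^2) * key
end

section
/- For any three normalized circle quadruples K₁, K₂, K₃, one has 4G = 4W + Δ₄², where G = Q₁(a₁−a₃)(a₂−a₃) + Q₂(a₂−a₁)(a₃−a₁) + Q₃(a₃−a₂)(a₁−a₂). Equivalently, for every real t: W·t² − (1/4)·Δ₄²·(1−t²) = G·t² − (1/4)·Δ₄². -/
theorem stmt_14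
    (a₁ b₁ c₁ d₁ a₂ b₂ c₂ d₂ a₃ b₃ c₃ d₃ : ℝ)
    (h₁ : b₁^2 + c₁^2 - a₁*d₁ = 1)
    (h₂ : b₂^2 + c₂^2 - a₂*d₂ = 1)
    (h₃ : b₃^2 + c₃^2 - a₃*d₃ = 1)
    (Q₁ Q₂ Q₃ : ℝ)
    (hQ₁ : 4*Q₁ = 2 + a₁*d₂ + a₂*d₁ - 2*(b₁*b₂ + c₁*c₂))
    (hQ₂ : 4*Q₂ = 2 + a₂*d₃ + a₃*d₂ - 2*(b₂*b₃ + c₂*c₃))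
    (hQ₃ : 4*Q₃ = 2 + a₃*d₁ + a₁*d₃ - 2*(b₃*b₁ + c₃*c₁))
    (W : ℝ)
    (hW : W = a₁*Q₂*(a₁*Q₂-2*a₂*Q₃) + a₂*Q₃*(a₂*Q₃-2*a₃*Q₁) + a₃*Q₁*(a₃*Q₁-2*a₁*Q₂))
    (Δ₄ : ℝ)
    (hΔ₄ : Δ₄ = Matrix.det !![a₁,b₁,c₁; a₂,b₂,c₂; a₃,b₃,c₃])
    (G : ℝ)
    (hG : G = Q₁*(a₁-a₃)*(a₂-a₃) + Q₂*(a₂-a₁)*(a₃-a₁) + Q₃*(a₃-a₂)*(a₁-a₂)) :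
    4*G = 4*W + Δ₄^2 ∧
    (∀ t : ℝ, W*t^2 - (1/4)*Δ₄^2*(1-t^2) = G*t^2 - (1/4)*Δ₄^2) := by
  have hD : Δ₄ = a₁*(b₂*c₃-c₂*b₃) - b₁*(a₂*c₃-c₂*a₃) + c₁*(a₂*b₃-b₂*a₃) := by
    rw [hΔ₄, Matrix.det_fin_three]; simp; ring
  have key : 4*G = 4*W + Δ₄^2 := by
    rw [hW, hG, hD]
    linear_combination ((1/2)*a₃^2 + (-1)*a₂*a₃ + (-1/4)*d₁*a₂*a₃^2 + (1/2)*c₁*c₂*a₃^2 + (1/2)*b₁*b₂*a₃^2 + (-1)*a₁*a₃ + (-1/4)*a₁*d₂*a₃^2 + (1)*a₁*a₂ + (2)*Q₃*a₂*a₃ + (2)*Q₂*a₁*a₃ + (-1)*Q₁*a₃^2)*hQ₁ + ((1)*a₂*a₃ + (-1)*a₁*a₂ + (1/2)*a₁*d₁*a₂*a₃ + (-1)*a₁*c₁*c₂*a₃ + (-1)*a₁*b₁*b₂*a₃ + (1/2)*a₁^2 + (1/4)*a₁^2*d₂*a₃ + (1/2)*a₁^2*c₂*c₃ + (1/2)*a₁^2*b₂*b₃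 + (-1/4)*a₁^2*a₂*d₃ + (2)*Q₃*a₁*a₂ + (-1)*Q₂*a₁^2)*hQ₂ + ((1/2)*a₂^2 + (1/4)*d₁*a₂^2*a₃ + (-1)*c₁*a₂*c₂*a₃ + (1/2)*c₁*a₂^2*c₃ + (-1)*b₁*a₂*b₂*a₃ + (1/2)*b₁*a₂^2*b₃ + (1)*a₁*a₃ + (1)*a₁*a₂*d₂*a₃ + (-1)*a₁*a₂*c₂*c₃ + (-1)*a₁*a₂*b₂*b₃ + (1/4)*a₁*a₂^2*d₃ + (-1)*Q₃*a₂^2)*hQ₃ + ((-1)*a₃^2 + (-1)*a₂*d₂*a₃^2 + (2)*a₂*c₂*a₃*c₃ + (2)*a₂*b₂*a₃*b₃ + (-1)*a₂^2 + (-1)*a₂^2*a₃*d₃)*h₁ + ((-1)*c₁^2*a₃^2 + (-1)*b₁^2*a₃^2 + (2)*a₁*c₁*a₃*c₃ + (2)*a₁*b₁*a₃*b₃ + (-1)*a₁^2 + (-1)*a₁^2*a₃*d₃)*h₂ + ((-1)*c₁^2*a₂^2 + (-1)*b₁^2*a₂^2 + (2)*a₁*c₁*a₂*c₂ + (2)*a₁*b₁*a₂*b₂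 + (-1)*a₁^2*c₂^2 + (-1)*a₁^2*b₂^2)*h₃
  refine ⟨key, fun t => ?_⟩
  nlinarith [key, sq_nonneg t]
end

section
/- For any three normalized circle quadruples K₁, K₂, K₃, one has 4G = Δ_ab² + Δ_ac², where G = Q₁(a₁−a₃)(a₂−a₃) + Q₂(a₂−a₁)(a₃−a₁) + Q₃(a₃−a₂)(a₁−a₂). In particular G ≥ 0. -/
theorem stmt_15
    (a₁ b₁ c₁ d₁ a₂ b₂ c₂ d₂ a₃ b₃ c₃ d₃ : ℝ)
    (h₁ : b₁^2 + c₁^2 - a₁*d₁ = 1)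
    (h₂ : b₂^2 + c₂^2 - a₂*d₂ = 1)
    (h₃ : b₃^2 + c₃^2 - a₃*d₃ = 1)
    (Q₁ Q₂ Q₃ : ℝ)
    (hQ₁ : 4*Q₁ = 2 + a₁*d₂ + a₂*d₁ - 2*(b₁*b₂ + c₁*c₂))
    (hQ₂ : 4*Q₂ = 2 + a₂*d₃ + a₃*d₂ - 2*(b₂*b₃ + c₂*c₃))
    (hQ₃ : 4*Q₃ = 2 + a₃*d₁ + a₁*d₃ - 2*(b₃*b₁ + c₃*c₁))
    (Δab Δac : ℝ)
    (hΔab : Δab = Matrix.det !![a₁,b₁,1; a₂,b₂,1; a₃,b₃,1])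
    (hΔac : Δac = Matrix.det !![a₁,c₁,1; a₂,c₂,1; a₃,c₃,1])
    (G : ℝ)
    (hG : G = Q₁*(a₁-a₃)*(a₂-a₃) + Q₂*(a₂-a₁)*(a₃-a₁) + Q₃*(a₃-a₂)*(a₁-a₂)) :
    4*G = Δab^2 + Δac^2 ∧ 0 ≤ G := by
  have hab : Δab = a₁*b₂ - a₁*b₃ - a₂*b₁ + a₂*b₃ + a₃*b₁ - a₃*b₂ := by
    rw [hΔab, Matrix.det_fin_three]
    simp [Matrix.vecHead, Matrix.vecTail]
    ring
  have hac : Δac = a₁*c₂ - a₁*c₃ - a₂*c₁ + a₂*c₃ + a₃*c₁ - a₃*c₂ := by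
    rw [hΔac, Matrix.det_fin_three]
    simp [Matrix.vecHead, Matrix.vecTail]
    ring
  have key : 4*G = Δab^2 + Δac^2 := by
    rw [hab, hac]
    linear_combination 4*hG + ((a₁-a₃)*(a₂-a₃))*hQ₁ + ((a₂-a₁)*(a₃-a₁))*hQ₂
      + ((a₃-a₂)*(a₁-a₂))*hQ₃ - (a₂-a₃)^2*h₁ - (a₃-a₁)^2*h₂ - (a₁-a₂)^2*h₃
  exact ⟨key, by nlinarith [sq_nonneg Δab, sq_nonneg Δac]⟩
end

section
/- Let K₁, K₂, K₃ be three normalized circle quadruples with U ≠ 0, let t ∈ ℝ, set D = (1/4)·U·(1−t²) + Q₁Q₂Q₃·t², assume D ≥ 0, and let ε ∈ {1,−1}. Define a₀ = (t·(a₁v₂+a₂v₃+a₃v₁) + ε·Δ₄·√D)/U, b₀ = (t·(b₁v₂+b₂v₃+b₃v₁) + ε·Δ₂·√D)/U, c₀ = (t·(c₁v₂+c₂v₃+c₃v₁) + ε·Δ₃·√D)/U, d₀ = (t·(d₁v₂+d₂v₃+d₃v₁) + ε·Δ₁·√D)/U. Then b₀² + c₀² − a₀d₀ = 1, and for each i ∈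 {1,2,3}: 2b₀b_i + 2c₀c_i − a₀d_i − a_id₀ = 2t (i.e., the circle K₀ = (a₀,b₀,c₀,d₀) meets each given circle at the same angle Ψ₀ with cos Ψ₀ = t: the isogonal Apollonius solution). -/
theorem stmt_16
    (a₁ b₁ c₁ d₁ a₂ b₂ c₂ d₂ a₃ b₃ c₃ d₃ : ℝ)
    (h₁ : b₁^2 + c₁^2 - a₁*d₁ = 1)
    (h₂ : b₂^2 + c₂^2 - a₂*d₂ = 1)
    (h₃ : b₃^2 + c₃^2 - a₃*d₃ = 1)
    (Q₁ Q₂ Q₃ : ℝ)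
    (hQ₁ : 4*Q₁ = 2 + a₁*d₂ + a₂*d₁ - 2*(b₁*b₂ + c₁*c₂))
    (hQ₂ : 4*Q₂ = 2 + a₂*d₃ + a₃*d₂ - 2*(b₂*b₃ + c₂*c₃))
    (hQ₃ : 4*Q₃ = 2 + a₃*d₁ + a₁*d₃ - 2*(b₃*b₁ + c₃*c₁))
    (U : ℝ)
    (hU : U = Q₁*(Q₁-2*Q₂) + Q₂*(Q₂-2*Q₃) + Q₃*(Q₃-2*Q₁) + 4*Q₁*Q₂*Q₃)
    (v₁ v₂ v₃ V : ℝ)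
    (hv₁ : v₁ = Q₁*(Q₁-Q₂-Q₃))
    (hv₂ : v₂ = Q₂*(Q₂-Q₃-Q₁))
    (hv₃ : v₃ = Q₃*(Q₃-Q₁-Q₂))
    (hV : V = a₁*v₂ + a₂*v₃ + a₃*v₁)
    (Δ₁ Δ₂ Δ₃ Δ₄ : ℝ)
    (hΔ₁ : Δ₁ = -Matrix.det !![b₁,c₁,d₁; b₂,c₂,d₂; b₃,c₃,d₃])
    (hΔ₂ : Δ₂ = -(1/2) * Matrix.det !![a₁,c₁,d₁; a₂,c₂,d₂; a₃,c₃,d₃])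
    (hΔ₃ : Δ₃ = (1/2) * Matrix.det !![a₁,b₁,d₁; a₂,b₂,d₂; a₃,b₃,d₃])
    (hΔ₄ : Δ₄ = Matrix.det !![a₁,b₁,c₁; a₂,b₂,c₂; a₃,b₃,c₃])
    (hU0 : U ≠ 0)
    (t : ℝ)
    (D : ℝ)
    (hD : D = (1/4)*U*(1-t^2) + Q₁*Q₂*Q₃*t^2)
    (hDpos : 0 ≤ D)
    (ε : ℝ) (hε : ε = 1 ∨ ε = -1)
    (a₀ b₀ c₀ d₀ : ℝ)
    (ha₀ : a₀ = (t*(a₁*v₂ + a₂*v₃ + a₃*v₁) + ε*Δ₄*Real.sqrt D)/U)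
    (hb₀ : b₀ = (t*(b₁*v₂ + b₂*v₃ + b₃*v₁) + ε*Δ₂*Real.sqrt D)/U)
    (hc₀ : c₀ = (t*(c₁*v₂ + c₂*v₃ + c₃*v₁) + ε*Δ₃*Real.sqrt D)/U)
    (hd₀ : d₀ = (t*(d₁*v₂ + d₂*v₃ + d₃*v₁) + ε*Δ₁*Real.sqrt D)/U) :
    b₀^2 + c₀^2 - a₀*d₀ = 1 ∧
    2*b₀*b₁ + 2*c₀*c₁ - a₀*d₁ - a₁*d₀ = 2*t ∧
    2*b₀*b₂ + 2*c₀*c₂ - a₀*d₂ - a₂*d₀ = 2*t ∧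
    2*b₀*b₃ + 2*c₀*c₃ - a₀*d₃ - a₃*d₀ = 2*t := by
  have he : ε^2 = 1 := by rcases hε with h|h <;> rw [h] <;> norm_num
  have hΔ₁ : Δ₁ = -(b₁*(c₂*d₃ - d₂*c₃) - c₁*(b₂*d₃ - d₂*b₃) + d₁*(b₂*c₃ - c₂*b₃)) := by
    rw [hΔ₁, Matrix.det_fin_three]; simp; ring
  have hΔ₂ : Δ₂ = -(1/2)*(a₁*(c₂*d₃ - d₂*c₃) - c₁*(a₂*d₃ - d₂*a₃) + d₁*(a₂*c₃ - c₂*a₃)) := by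
    rw [hΔ₂, Matrix.det_fin_three]; simp; ring
  have hΔ₃ : Δ₃ = (1/2)*(a₁*(b₂*d₃ - d₂*b₃) - b₁*(a₂*d₃ - d₂*a₃) + d₁*(a₂*b₃ - b₂*a₃)) := by
    rw [hΔ₃, Matrix.det_fin_three]; simp; ring
  have hΔ₄ : Δ₄ = a₁*(b₂*c₃ - c₂*b₃) - b₁*(a₂*c₃ - c₂*a₃) + c₁*(a₂*b₃ - b₂*a₃) := by
    rw [hΔ₄, Matrix.det_fin_three]; simp; ring
  set s := Real.sqrt D with hsdef
  have hs : s^2 = D := Real.sq_sqrt hDpos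
  have ea : U * a₀ = t*(a₁*v₂ + a₂*v₃ + a₃*v₁) + ε*Δ₄*s := by
    rw [ha₀]; field_simp
  have eb : U * b₀ = t*(b₁*v₂ + b₂*v₃ + b₃*v₁) + ε*Δ₂*s := by
    rw [hb₀]; field_simp
  have ec : U * c₀ = t*(c₁*v₂ + c₂*v₃ + c₃*v₁) + ε*Δ₃*s := by
    rw [hc₀]; field_simp
  have ed : U * d₀ = t*(d₁*v₂ + d₂*v₃ + d₃*v₁) + ε*Δ₁*s := by
    rw [hd₀]; field_simp
  have E1 : (b₁*v₂+b₂*v₃+b₃*v₁)^2 + (c₁*v₂+c₂*v₃+c₃*v₁)^2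
      - (a₁*v₂+a₂*v₃+a₃*v₁)*(d₁*v₂+d₂*v₃+d₃*v₁) = U*(U-4*Q₁*Q₂*Q₃) := by
    have hX : (b₁*v₂+b₂*v₃+b₃*v₁)^2 + (c₁*v₂+c₂*v₃+c₃*v₁)^2
        - (a₁*v₂+a₂*v₃+a₃*v₁)*(d₁*v₂+d₂*v₃+d₃*v₁)
        = v₁^2+v₂^2+v₃^2+(2-4*Q₁)*v₂*v₃+(2-4*Q₂)*v₃*v₁+(2-4*Q₃)*v₁*v₂ := by
      linear_combination v₂^2*h₁ + v₃^2*h₂ + v₁^2*h₃ + (v₂*v₃)*hQ₁ + (v₃*v₁)*hQ₂ + (v₁*v₂)*hQ₃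
    have hQid : v₁^2+v₂^2+v₃^2+(2-4*Q₁)*v₂*v₃+(2-4*Q₂)*v₃*v₁+(2-4*Q₃)*v₁*v₂
        = U*(U-4*Q₁*Q₂*Q₃) := by
      linear_combination ((-1:ℝ)*U + (-1:ℝ)*Q₃^2 + (2:ℝ)*Q₂*Q₃ + (-1:ℝ)*Q₂^2 + (2:ℝ)*Q₁*Q₃ + (2:ℝ)*Q₁*Q₂ + (-1:ℝ)*Q₁^2) * hU + ((2:ℝ)*v₃ + (2:ℝ)*v₂ + v₁ + (-4:ℝ)*Q₃*v₂ + (-4:ℝ)*Q₂*v₃ + (-1:ℝ)*Q₁*Q₃ + (-1:ℝ)*Q₁*Q₂ + Q₁^2) * hv₁ + ((2:ℝ)*v₃ + v₂ + (-1:ℝ)*Q₂*Q₃ + Q₂^2 + (-4:ℝ)*Q₁*v₃ + (-2:ℝ)*Q₁*Q₃ + (4:ℝ)*Q₁*Q₃^2 + (-3:ℝ)*Q₁*Q₂ + (4:ℝ)*Q₁*Q₂*Q₃ + (2:ℝ)*Q₁^2 + (-4:ℝ)*Q₁^2*Q₃) * hv₂ + (v₃ + Q₃^2 + (-3:ℝ)*Q₂*Q₃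 + (2:ℝ)*Q₂^2 + (-3:ℝ)*Q₁*Q₃ + (-4:ℝ)*Q₁*Q₂ + (8:ℝ)*Q₁*Q₂*Q₃ + (2:ℝ)*Q₁^2) * hv₃
    exact hX.trans hQid
  have E2 : Δ₂^2 + Δ₃^2 - Δ₁*Δ₄ = 4*U := by
    linear_combination ((-1:ℝ)*Δ₄) * hΔ₁ + (Δ₂ + (1/2:ℝ)*d₁*c₂*a₃ + (-(1/2:ℝ))*d₁*a₂*c₃ + (-(1/2:ℝ))*c₁*d₂*a₃ + (1/2:ℝ)*c₁*a₂*d₃ + (1/2:ℝ)*a₁*d₂*c₃ + (-(1/2:ℝ))*a₁*c₂*d₃) * hΔ₂ + (Δ₃ + (-(1/2:ℝ))*d₁*b₂*a₃ + (1/2:ℝ)*d₁*a₂*b₃ + (1/2:ℝ)*b₁*d₂*a₃ + (-(1/2:ℝ))*b₁*a₂*d₃ + (-(1/2:ℝ))*a₁*d₂*b₃ + (1/2:ℝ)*a₁*b₂*d₃) * hΔ₃ + ((-1:ℝ)*d₁*c₂*b₃ + d₁*b₂*c₃ + c₁*d₂*b₃ + (-1:ℝ)*c₁*b₂*d₃ +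 (-1:ℝ)*b₁*d₂*c₃ + b₁*c₂*d₃) * hΔ₄ + ((-4:ℝ)) * hU + ((-(1/2:ℝ)) + (2:ℝ)*Q₃ + (2:ℝ)*Q₂ + (-4:ℝ)*Q₂*Q₃ + (-1:ℝ)*Q₁ + (-(1/4:ℝ))*d₁*a₂ + (1/2:ℝ)*c₁*c₂ + (1/2:ℝ)*b₁*b₂ + (-(1/4:ℝ))*a₁*d₂) * hQ₁ + ((1/2:ℝ) + (-1:ℝ)*Q₂ + (-(1/4:ℝ))*d₂*a₃ + (1/2:ℝ)*c₂*c₃ + (1/2:ℝ)*b₂*b₃ + (-(1/4:ℝ))*a₂*d₃ + (1/2:ℝ)*d₁*a₂ + (-1:ℝ)*d₁*a₂*Q₃ + (-1:ℝ)*c₁*c₂ + (2:ℝ)*c₁*c₂*Q₃ + (-1:ℝ)*b₁*b₂ + (2:ℝ)*b₁*b₂*Q₃ + (1/2:ℝ)*a₁*d₂ + (-1:ℝ)*a₁*d₂*Q₃) * hQ₂ + ((1/2:ℝ) + (-1:ℝ)*Q₃ + (-(1/4:ℝ))*d₁*a₃ + (-(1/4:ℝ))*d₁*a₂*d₂*a₃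 + (1/2:ℝ)*d₁*a₂*c₂*c₃ + (1/2:ℝ)*d₁*a₂*b₂*b₃ + (-(1/4:ℝ))*d₁*a₂^2*d₃ + (1/2:ℝ)*c₁*c₃ + (1/2:ℝ)*c₁*c₂*d₂*a₃ + (-1:ℝ)*c₁*c₂^2*c₃ + (-1:ℝ)*c₁*b₂*c₂*b₃ + (1/2:ℝ)*c₁*a₂*c₂*d₃ + (1/2:ℝ)*b₁*b₃ + (1/2:ℝ)*b₁*b₂*d₂*a₃ + (-1:ℝ)*b₁*b₂*c₂*c₃ + (-1:ℝ)*b₁*b₂^2*b₃ + (1/2:ℝ)*b₁*a₂*b₂*d₃ + (-(1/4:ℝ))*a₁*d₃ + (-(1/4:ℝ))*a₁*d₂^2*a₃ + (1/2:ℝ)*a₁*c₂*d₂*c₃ + (1/2:ℝ)*a₁*b₂*d₂*b₃ + (-(1/4:ℝ))*a₁*a₂*d₂*d₃) * hQ₃ + ((-1:ℝ)*b₃^2 + (1/4:ℝ)*d₂^2*a₃^2 + (-1:ℝ)*c₂*d₂*a₃*c₃ + c₂^2*a₃*d₃ + (-1:ℝ)*b₂*d₂*a₃*b₃ + (2:ℝ)*b₂*c₂*b₃*c₃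 + (-1:ℝ)*b₂^2 + (2:ℝ)*b₂^2*b₃^2 + a₂*d₂*c₃^2 + (-(1/2:ℝ))*a₂*d₂*a₃*d₃ + (-1:ℝ)*a₂*c₂*c₃*d₃ + (-1:ℝ)*a₂*b₂*b₃*d₃ + (1/4:ℝ)*a₂^2*d₃^2) * h₁ + ((-1:ℝ) + b₃^2 + (1/4:ℝ)*d₁^2*a₃^2 + (-1:ℝ)*c₁*d₁*a₃*c₃ + c₁^2 + (-2:ℝ)*c₁^2*b₃^2 + c₁^2*a₃*d₃ + (-1:ℝ)*b₁*d₁*a₃*b₃ + (2:ℝ)*b₁*c₁*b₃*c₃ + (-1:ℝ)*a₁*d₁ + a₁*d₁*c₃^2 + (2:ℝ)*a₁*d₁*b₃^2 + (-(1/2:ℝ))*a₁*d₁*a₃*d₃ + (-1:ℝ)*a₁*c₁*c₃*d₃ + (-1:ℝ)*a₁*b₁*b₃*d₃ + (1/4:ℝ)*a₁^2*d₃^2) * h₂ + ((-1:ℝ)*c₂^2 + a₂*d₂ + (1/4:ℝ)*d₁^2*a₂^2 + (-1:ℝ)*c₁*d₁*a₂*c₂ + (-1:ℝ)*c₁^2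 + (2:ℝ)*c₁^2*c₂^2 + (-1:ℝ)*c₁^2*a₂*d₂ + (-1:ℝ)*b₁*d₁*a₂*b₂ + (2:ℝ)*b₁*c₁*b₂*c₂ + a₁*d₁ + (-1:ℝ)*a₁*d₁*c₂^2 + (3/2:ℝ)*a₁*d₁*a₂*d₂ + (-1:ℝ)*a₁*c₁*c₂*d₂ + (-1:ℝ)*a₁*b₁*b₂*d₂ + (1/4:ℝ)*a₁^2*d₂^2) * h₃
  have E3 : 2*(b₁*v₂+b₂*v₃+b₃*v₁)*Δ₂ + 2*(c₁*v₂+c₂*v₃+c₃*v₁)*Δ₃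
      - (a₁*v₂+a₂*v₃+a₃*v₁)*Δ₁ - (d₁*v₂+d₂*v₃+d₃*v₁)*Δ₄ = 0 := by
    linear_combination ((-1:ℝ)*a₃*v₁ + (-1:ℝ)*a₂*v₃ + (-1:ℝ)*a₁*v₂) * hΔ₁ + ((2:ℝ)*b₃*v₁ + (2:ℝ)*b₂*v₃ + (2:ℝ)*b₁*v₂) * hΔ₂ + ((2:ℝ)*c₃*v₁ + (2:ℝ)*c₂*v₃ + (2:ℝ)*c₁*v₂) * hΔ₃ + ((-1:ℝ)*d₃*v₁ + (-1:ℝ)*d₂*v₃ + (-1:ℝ)*d₁*v₂) * hΔ₄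
  have key0 : U^2 * (b₀^2 + c₀^2 - a₀*d₀) = U^2 * 1 := by
    linear_combination (U*b₀ + (t*(b₁*v₂+b₂*v₃+b₃*v₁) + ε*Δ₂*s))*eb
      + (U*c₀ + (t*(c₁*v₂+c₂*v₃+c₃*v₁) + ε*Δ₃*s))*ec
      - (U*d₀)*ea - (t*(a₁*v₂+a₂*v₃+a₃*v₁) + ε*Δ₄*s)*ed
      + t^2*E1 + ε^2*s^2*E2 + t*ε*s*E3 + 4*U*ε^2*hs + 4*U*D*he + 4*U*hD
  have key1 : U * (2*b₀*b₁ + 2*c₀*c₁ - a₀*d₁ - a₁*d₀) = U * (2*t) := by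
    linear_combination (2*b₁)*eb + (2*c₁)*ec - d₁*ea - a₁*ed + ((-1:ℝ)*a₁*ε*s) * hΔ₁ + ((2:ℝ)*b₁*ε*s) * hΔ₂ + ((2:ℝ)*c₁*ε*s) * hΔ₃ + ((-1:ℝ)*d₁*ε*s) * hΔ₄ + ((-2:ℝ)*t) * hU + ((-1:ℝ)*d₁*a₃*t + (2:ℝ)*c₁*c₃*t + (2:ℝ)*b₁*b₃*t + (-1:ℝ)*a₁*d₃*t) * hv₁ + ((2:ℝ)*c₁^2*t + (2:ℝ)*b₁^2*t + (-2:ℝ)*a₁*d₁*t) * hv₂ + ((-1:ℝ)*d₁*a₂*t + (2:ℝ)*c₁*c₂*t + (2:ℝ)*b₁*b₂*t + (-1:ℝ)*a₁*d₂*t) * hv₃ + ((-(1/4:ℝ))*t + t*Q₃ + t*Q₂ + (-2:ℝ)*t*Q₂*Q₃ + (-(1/2:ℝ))*t*Q₁ + (-(1/8:ℝ))*d₁*a₃*t + (1/4:ℝ)*d₁*a₃*t*Q₃ + (1/4:ℝ)*d₁*a₃*t*Q₂ + (-(1/4:ℝ))*d₁*a₃*t*Q₁ + (-(1/8:ℝ))*d₁*a₂*t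 + (1/4:ℝ)*d₁*a₂*t*Q₃ + (-(1/16:ℝ))*d₁^2*a₂*a₃*t + (1/4:ℝ)*c₁*c₃*t + (-(1/2:ℝ))*c₁*c₃*t*Q₃ + (-(1/2:ℝ))*c₁*c₃*t*Q₂ + (1/2:ℝ)*c₁*c₃*t*Q₁ + (1/4:ℝ)*c₁*c₂*t + (-(1/2:ℝ))*c₁*c₂*t*Q₃ + (1/8:ℝ)*c₁*d₁*c₂*a₃*t + (1/8:ℝ)*c₁*d₁*a₂*c₃*t + (-(1/2:ℝ))*c₁^2*t*Q₂ + (-(1/4:ℝ))*c₁^2*c₂*c₃*t + (1/4:ℝ)*b₁*b₃*t + (-(1/2:ℝ))*b₁*b₃*t*Q₃ + (-(1/2:ℝ))*b₁*b₃*t*Q₂ + (1/2:ℝ)*b₁*b₃*t*Q₁ + (1/4:ℝ)*b₁*b₂*t + (-(1/2:ℝ))*b₁*b₂*t*Q₃ + (1/8:ℝ)*b₁*d₁*b₂*a₃*t + (1/8:ℝ)*b₁*d₁*a₂*b₃*t + (-(1/4:ℝ))*b₁*c₁*c₂*b₃*t + (-(1/4:ℝ))*b₁*c₁*b₂*c₃*t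 + (-(1/2:ℝ))*b₁^2*t*Q₂ + (-(1/4:ℝ))*b₁^2*b₂*b₃*t + (-(1/8:ℝ))*a₁*d₃*t + (1/4:ℝ)*a₁*d₃*t*Q₃ + (1/4:ℝ)*a₁*d₃*t*Q₂ + (-(1/4:ℝ))*a₁*d₃*t*Q₁ + (-(1/8:ℝ))*a₁*d₂*t + (1/4:ℝ)*a₁*d₂*t*Q₃ + (1/2:ℝ)*a₁*d₁*t*Q₂ + (-(1/16:ℝ))*a₁*d₁*d₂*a₃*t + (-(1/16:ℝ))*a₁*d₁*a₂*d₃*t + (1/8:ℝ)*a₁*c₁*d₂*c₃*t + (1/8:ℝ)*a₁*c₁*c₂*d₃*t + (1/8:ℝ)*a₁*b₁*d₂*b₃*t + (1/8:ℝ)*a₁*b₁*b₂*d₃*t + (-(1/16:ℝ))*a₁^2*d₂*d₃*t) * hQ₁ + ((1/4:ℝ)*t + (-(1/2:ℝ))*t*Q₂ + (-(1/8:ℝ))*d₂*a₃*t + (1/4:ℝ)*c₂*c₃*t + (1/4:ℝ)*b₂*b₃*t + (-(1/8:ℝ))*a₂*d₃*t + (1/8:ℝ)*d₁*a₃*t +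 (1/4:ℝ)*d₁*a₂*t + (-(1/4:ℝ))*d₁*a₂*t*Q₃ + (1/16:ℝ)*d₁^2*a₂*a₃*t + (-(1/4:ℝ))*c₁*c₃*t + (-(1/2:ℝ))*c₁*c₂*t + (1/2:ℝ)*c₁*c₂*t*Q₃ + (-(1/8:ℝ))*c₁*d₁*c₂*a₃*t + (-(1/8:ℝ))*c₁*d₁*a₂*c₃*t + (-(1/2:ℝ))*c₁^2*t*Q₃ + (1/2:ℝ)*c₁^2*t*Q₂ + (1/8:ℝ)*c₁^2*d₂*a₃*t + (-(1/4:ℝ))*c₁^2*b₂*b₃*t + (1/8:ℝ)*c₁^2*a₂*d₃*t + (-(1/8:ℝ))*c₁^2*d₁*a₂*t + (1/4:ℝ)*c₁^3*c₂*t + (-(1/4:ℝ))*b₁*b₃*t + (-(1/2:ℝ))*b₁*b₂*t + (1/2:ℝ)*b₁*b₂*t*Q₃ + (-(1/8:ℝ))*b₁*d₁*b₂*a₃*t + (-(1/8:ℝ))*b₁*d₁*a₂*b₃*t + (1/4:ℝ)*b₁*c₁*c₂*b₃*t + (1/4:ℝ)*b₁*c₁*b₂*c₃*t + (1/4:ℝ)*b₁*c₁^2*b₂*t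 + (-(1/2:ℝ))*b₁^2*t*Q₃ + (1/2:ℝ)*b₁^2*t*Q₂ + (1/8:ℝ)*b₁^2*d₂*a₃*t + (-(1/4:ℝ))*b₁^2*c₂*c₃*t + (1/8:ℝ)*b₁^2*a₂*d₃*t + (-(1/8:ℝ))*b₁^2*d₁*a₂*t + (1/4:ℝ)*b₁^2*c₁*c₂*t + (1/4:ℝ)*b₁^3*b₂*t + (1/8:ℝ)*a₁*d₃*t + (1/4:ℝ)*a₁*d₂*t + (-(1/4:ℝ))*a₁*d₂*t*Q₃ + (1/2:ℝ)*a₁*d₁*t*Q₃ + (-(1/2:ℝ))*a₁*d₁*t*Q₂ + (-(1/16:ℝ))*a₁*d₁*d₂*a₃*t + (1/4:ℝ)*a₁*d₁*c₂*c₃*t + (1/4:ℝ)*a₁*d₁*b₂*b₃*t + (-(1/16:ℝ))*a₁*d₁*a₂*d₃*t + (1/8:ℝ)*a₁*d₁^2*a₂*t + (-(1/8:ℝ))*a₁*c₁*d₂*c₃*t + (-(1/8:ℝ))*a₁*c₁*c₂*d₃*t + (-(1/4:ℝ))*a₁*c₁*d₁*c₂*t + (-(1/8:ℝ))*a₁*c₁^2*d₂*t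 + (-(1/8:ℝ))*a₁*b₁*d₂*b₃*t + (-(1/8:ℝ))*a₁*b₁*b₂*d₃*t + (-(1/4:ℝ))*a₁*b₁*d₁*b₂*t + (-(1/8:ℝ))*a₁*b₁^2*d₂*t + (1/16:ℝ)*a₁^2*d₂*d₃*t + (1/8:ℝ)*a₁^2*d₁*d₂*t) * hQ₂ + ((1/4:ℝ)*t + (-(1/2:ℝ))*t*Q₃ + (1/8:ℝ)*d₁*a₂*t + (-(1/4:ℝ))*d₁*a₂*t*Q₃ + (-(1/16:ℝ))*d₁*a₂*d₂*a₃*t + (1/8:ℝ)*d₁*a₂*c₂*c₃*t + (1/8:ℝ)*d₁*a₂*b₂*b₃*t + (-(1/16:ℝ))*d₁*a₂^2*d₃*t + (1/16:ℝ)*d₁^2*a₂^2*t + (-(1/4:ℝ))*c₁*c₂*t + (1/2:ℝ)*c₁*c₂*t*Q₃ + (1/8:ℝ)*c₁*c₂*d₂*a₃*t + (-(1/4:ℝ))*c₁*c₂^2*c₃*t + (-(1/4:ℝ))*c₁*b₂*c₂*b₃*t + (1/8:ℝ)*c₁*a₂*c₂*d₃*t + (-(1/4:ℝ))*c₁*d₁*a₂*c₂*t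 + (-(1/4:ℝ))*c₁^2*t + (-(1/8:ℝ))*c₁^2*d₂*a₃*t + (1/4:ℝ)*c₁^2*c₂*c₃*t + (1/4:ℝ)*c₁^2*c₂^2*t + (1/4:ℝ)*c₁^2*b₂*b₃*t + (-(1/8:ℝ))*c₁^2*a₂*d₃*t + (-(1/4:ℝ))*b₁*b₂*t + (1/2:ℝ)*b₁*b₂*t*Q₃ + (1/8:ℝ)*b₁*b₂*d₂*a₃*t + (-(1/4:ℝ))*b₁*b₂*c₂*c₃*t + (-(1/4:ℝ))*b₁*b₂^2*b₃*t + (1/8:ℝ)*b₁*a₂*b₂*d₃*t + (-(1/4:ℝ))*b₁*d₁*a₂*b₂*t + (1/2:ℝ)*b₁*c₁*b₂*c₂*t + (-(1/4:ℝ))*b₁^2*t + (-(1/8:ℝ))*b₁^2*d₂*a₃*t + (1/4:ℝ)*b₁^2*c₂*c₃*t + (1/4:ℝ)*b₁^2*b₂*b₃*t + (1/4:ℝ)*b₁^2*b₂^2*t + (-(1/8:ℝ))*b₁^2*a₂*d₃*t + (1/8:ℝ)*a₁*d₂*t + (-(1/4:ℝ))*a₁*d₂*t*Q₃ + (-(1/16:ℝ))*a₁*d₂^2*a₃*t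 + (1/8:ℝ)*a₁*c₂*d₂*c₃*t + (1/8:ℝ)*a₁*b₂*d₂*b₃*t + (-(1/16:ℝ))*a₁*a₂*d₂*d₃*t + (1/4:ℝ)*a₁*d₁*t + (1/8:ℝ)*a₁*d₁*d₂*a₃*t + (-(1/4:ℝ))*a₁*d₁*c₂*c₃*t + (-(1/4:ℝ))*a₁*d₁*b₂*b₃*t + (1/8:ℝ)*a₁*d₁*a₂*d₃*t + (1/8:ℝ)*a₁*d₁*a₂*d₂*t + (-(1/4:ℝ))*a₁*c₁*c₂*d₂*t + (-(1/4:ℝ))*a₁*b₁*b₂*d₂*t + (1/16:ℝ)*a₁^2*d₂^2*t) * hQ₃ + ((-(1/2:ℝ))*t + (1/8:ℝ)*d₂^2*a₃^2*t + (-(1/2:ℝ))*c₂*d₂*a₃*c₃*t + (1/2:ℝ)*c₂^2*c₃^2*t + (-(1/2:ℝ))*b₂*d₂*a₃*b₃*t + b₂*c₂*b₃*c₃*t + (1/2:ℝ)*b₂^2*b₃^2*t + (1/4:ℝ)*a₂*d₂*a₃*d₃*t + (-(1/2:ℝ))*a₂*c₂*c₃*d₃*t + (-(1/2:ℝ))*a₂*b₂*b₃*d₃*t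 + (1/8:ℝ)*a₂^2*d₃^2*t + (-(1/4:ℝ))*d₁*a₃*t + (-(1/8:ℝ))*d₁*d₂*a₃^2*t + (1/4:ℝ)*d₁*c₂*a₃*c₃*t + (1/4:ℝ)*d₁*b₂*a₃*b₃*t + (-(1/4:ℝ))*d₁*a₂*t + (-(1/8:ℝ))*d₁*a₂*a₃*d₃*t + (-(1/8:ℝ))*d₁*a₂*d₂*a₃*t + (1/4:ℝ)*d₁*a₂*c₂*c₃*t + (1/4:ℝ)*d₁*a₂*b₂*b₃*t + (-(1/8:ℝ))*d₁*a₂^2*d₃*t + (1/2:ℝ)*c₁*c₃*t + (1/4:ℝ)*c₁*d₂*a₃*c₃*t + (1/2:ℝ)*c₁*c₂*t + (-(1/2:ℝ))*c₁*c₂*c₃^2*t + (1/4:ℝ)*c₁*c₂*d₂*a₃*t + (-(1/2:ℝ))*c₁*c₂^2*c₃*t + (-(1/2:ℝ))*c₁*b₂*b₃*c₃*t + (-(1/2:ℝ))*c₁*b₂*c₂*b₃*t + (1/4:ℝ)*c₁*a₂*c₃*d₃*t + (1/4:ℝ)*c₁*a₂*c₂*d₃*t + (1/2:ℝ)*b₁*b₃*t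 + (1/4:ℝ)*b₁*d₂*a₃*b₃*t + (-(1/2:ℝ))*b₁*c₂*b₃*c₃*t + (1/2:ℝ)*b₁*b₂*t + (-(1/2:ℝ))*b₁*b₂*b₃^2*t + (1/4:ℝ)*b₁*b₂*d₂*a₃*t + (-(1/2:ℝ))*b₁*b₂*c₂*c₃*t + (-(1/2:ℝ))*b₁*b₂^2*b₃*t + (1/4:ℝ)*b₁*a₂*b₃*d₃*t + (1/4:ℝ)*b₁*a₂*b₂*d₃*t + (-(1/4:ℝ))*a₁*d₃*t + (-(1/4:ℝ))*a₁*d₂*t + (-(1/8:ℝ))*a₁*d₂*a₃*d₃*t + (-(1/8:ℝ))*a₁*d₂^2*a₃*t + (1/4:ℝ)*a₁*c₂*c₃*d₃*t + (1/4:ℝ)*a₁*c₂*d₂*c₃*t + (1/4:ℝ)*a₁*b₂*b₃*d₃*t + (1/4:ℝ)*a₁*b₂*d₂*b₃*t + (-(1/8:ℝ))*a₁*a₂*d₃^2*t + (-(1/8:ℝ))*a₁*a₂*d₂*d₃*t) * h₁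
  have key2 : U * (2*b₀*b₂ + 2*c₀*c₂ - a₀*d₂ - a₂*d₀) = U * (2*t) := by
    linear_combination (2*b₂)*eb + (2*c₂)*ec - d₂*ea - a₂*ed + ((-1:ℝ)*a₂*ε*s) * hΔ₁ + ((2:ℝ)*b₂*ε*s) * hΔ₂ + ((2:ℝ)*c₂*ε*s) * hΔ₃ + ((-1:ℝ)*d₂*ε*s) * hΔ₄ + ((-2:ℝ)*t) * hU + ((-1:ℝ)*d₂*a₃*t + (2:ℝ)*c₂*c₃*t + (2:ℝ)*b₂*b₃*t + (-1:ℝ)*a₂*d₃*t) * hv₁ + ((-1:ℝ)*d₁*a₂*t + (2:ℝ)*c₁*c₂*t + (2:ℝ)*b₁*b₂*t + (-1:ℝ)*a₁*d₂*t) * hv₂ + ((2:ℝ)*c₂^2*t + (2:ℝ)*b₂^2*t + (-2:ℝ)*a₂*d₂*t) * hv₃ + ((-(1/4:ℝ))*t + t*Q₃ + t*Q₂ + (-2:ℝ)*t*Q₂*Q₃ + (-(1/2:ℝ))*t*Q₁ + (-(1/8:ℝ))*d₂*a₃*t + (1/4:ℝ)*d₂*a₃*t*Q₃ + (1/4:ℝ)*d₂*a₃*t*Q₂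 + (-(1/4:ℝ))*d₂*a₃*t*Q₁ + (1/4:ℝ)*c₂*c₃*t + (-(1/2:ℝ))*c₂*c₃*t*Q₃ + (-(1/2:ℝ))*c₂*c₃*t*Q₂ + (1/2:ℝ)*c₂*c₃*t*Q₁ + (-(1/2:ℝ))*c₂^2*t*Q₃ + (1/4:ℝ)*b₂*b₃*t + (-(1/2:ℝ))*b₂*b₃*t*Q₃ + (-(1/2:ℝ))*b₂*b₃*t*Q₂ + (1/2:ℝ)*b₂*b₃*t*Q₁ + (-(1/2:ℝ))*b₂^2*t*Q₃ + (-(1/8:ℝ))*a₂*d₃*t + (1/4:ℝ)*a₂*d₃*t*Q₃ + (1/4:ℝ)*a₂*d₃*t*Q₂ + (-(1/4:ℝ))*a₂*d₃*t*Q₁ + (1/2:ℝ)*a₂*d₂*t*Q₃ + (-(1/8:ℝ))*d₁*a₂*t + (1/4:ℝ)*d₁*a₂*t*Q₂ + (-(1/16:ℝ))*d₁*a₂*d₂*a₃*t + (1/8:ℝ)*d₁*a₂*c₂*c₃*t + (1/8:ℝ)*d₁*a₂*b₂*b₃*t + (-(1/16:ℝ))*d₁*a₂^2*d₃*t + (1/4:ℝ)*c₁*c₂*t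 + (-(1/2:ℝ))*c₁*c₂*t*Q₂ + (1/8:ℝ)*c₁*c₂*d₂*a₃*t + (-(1/4:ℝ))*c₁*c₂^2*c₃*t + (-(1/4:ℝ))*c₁*b₂*c₂*b₃*t + (1/8:ℝ)*c₁*a₂*c₂*d₃*t + (1/4:ℝ)*b₁*b₂*t + (-(1/2:ℝ))*b₁*b₂*t*Q₂ + (1/8:ℝ)*b₁*b₂*d₂*a₃*t + (-(1/4:ℝ))*b₁*b₂*c₂*c₃*t + (-(1/4:ℝ))*b₁*b₂^2*b₃*t + (1/8:ℝ)*b₁*a₂*b₂*d₃*t + (-(1/8:ℝ))*a₁*d₂*t + (1/4:ℝ)*a₁*d₂*t*Q₂ + (-(1/16:ℝ))*a₁*d₂^2*a₃*t + (1/8:ℝ)*a₁*c₂*d₂*c₃*t + (1/8:ℝ)*a₁*b₂*d₂*b₃*t + (-(1/16:ℝ))*a₁*a₂*d₂*d₃*t) * hQ₁ + ((1/4:ℝ)*t + (-(1/2:ℝ))*t*Q₂ + (-(1/2:ℝ))*c₂^2*t*Q₃ + (-(1/2:ℝ))*b₂^2*t*Q₃ + (1/2:ℝ)*a₂*d₂*t*Q₃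 + (1/4:ℝ)*d₁*a₂*t + (-(1/4:ℝ))*d₁*a₂*t*Q₃ + (-(1/4:ℝ))*d₁*a₂*t*Q₂ + (1/16:ℝ)*d₁^2*a₂^2*t + (-(1/2:ℝ))*c₁*c₂*t + (1/2:ℝ)*c₁*c₂*t*Q₃ + (1/2:ℝ)*c₁*c₂*t*Q₂ + (-(1/4:ℝ))*c₁*d₁*a₂*c₂*t + (1/4:ℝ)*c₁^2*c₂^2*t + (-(1/2:ℝ))*b₁*b₂*t + (1/2:ℝ)*b₁*b₂*t*Q₃ + (1/2:ℝ)*b₁*b₂*t*Q₂ + (-(1/4:ℝ))*b₁*d₁*a₂*b₂*t + (1/2:ℝ)*b₁*c₁*b₂*c₂*t + (1/4:ℝ)*b₁^2*b₂^2*t + (1/4:ℝ)*a₁*d₂*t + (-(1/4:ℝ))*a₁*d₂*t*Q₃ + (-(1/4:ℝ))*a₁*d₂*t*Q₂ + (1/8:ℝ)*a₁*d₁*a₂*d₂*t + (-(1/4:ℝ))*a₁*c₁*c₂*d₂*t + (-(1/4:ℝ))*a₁*b₁*b₂*d₂*t + (1/16:ℝ)*a₁^2*d₂^2*t) * hQ₂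 + ((1/4:ℝ)*t + (-(1/2:ℝ))*t*Q₃ + (1/8:ℝ)*d₂*a₃*t + (-(1/4:ℝ))*c₂*c₃*t + (-(1/4:ℝ))*c₂^2*t + (1/2:ℝ)*c₂^2*t*Q₃ + (-(1/8:ℝ))*c₂^2*d₂*a₃*t + (1/4:ℝ)*c₂^3*c₃*t + (-(1/4:ℝ))*b₂*b₃*t + (1/4:ℝ)*b₂*c₂^2*b₃*t + (-(1/4:ℝ))*b₂^2*t + (1/2:ℝ)*b₂^2*t*Q₃ + (-(1/8:ℝ))*b₂^2*d₂*a₃*t + (1/4:ℝ)*b₂^2*c₂*c₃*t + (1/4:ℝ)*b₂^3*b₃*t + (1/8:ℝ)*a₂*d₃*t + (1/4:ℝ)*a₂*d₂*t + (-(1/2:ℝ))*a₂*d₂*t*Q₃ + (1/8:ℝ)*a₂*d₂^2*a₃*t + (-(1/4:ℝ))*a₂*c₂*d₂*c₃*t + (-(1/8:ℝ))*a₂*c₂^2*d₃*t + (-(1/4:ℝ))*a₂*b₂*d₂*b₃*t + (-(1/8:ℝ))*a₂*b₂^2*d₃*t + (1/8:ℝ)*a₂^2*d₂*d₃*t + (-(1/8:ℝ))*d₁*a₃*t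 + (1/8:ℝ)*d₁*c₂^2*a₃*t + (1/8:ℝ)*d₁*b₂^2*a₃*t + (1/8:ℝ)*d₁*a₂*t + (-(1/8:ℝ))*d₁*a₂*d₂*a₃*t + (-(1/8:ℝ))*d₁*a₂*c₂^2*t + (-(1/8:ℝ))*d₁*a₂*b₂^2*t + (1/8:ℝ)*d₁*a₂^2*d₂*t + (1/4:ℝ)*c₁*c₃*t + (-(1/4:ℝ))*c₁*c₂*t + (-(1/4:ℝ))*c₁*c₂^2*c₃*t + (1/4:ℝ)*c₁*c₂^3*t + (-(1/4:ℝ))*c₁*b₂^2*c₃*t + (1/4:ℝ)*c₁*b₂^2*c₂*t + (1/4:ℝ)*c₁*a₂*d₂*c₃*t + (-(1/4:ℝ))*c₁*a₂*c₂*d₂*t + (1/4:ℝ)*b₁*b₃*t + (-(1/4:ℝ))*b₁*c₂^2*b₃*t + (-(1/4:ℝ))*b₁*b₂*t + (1/4:ℝ)*b₁*b₂*c₂^2*t + (-(1/4:ℝ))*b₁*b₂^2*b₃*t + (1/4:ℝ)*b₁*b₂^3*t + (1/4:ℝ)*b₁*a₂*d₂*b₃*t + (-(1/4:ℝ))*b₁*a₂*b₂*d₂*t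 + (-(1/8:ℝ))*a₁*d₃*t + (1/8:ℝ)*a₁*d₂*t + (1/8:ℝ)*a₁*c₂^2*d₃*t + (-(1/8:ℝ))*a₁*c₂^2*d₂*t + (1/8:ℝ)*a₁*b₂^2*d₃*t + (-(1/8:ℝ))*a₁*b₂^2*d₂*t + (-(1/8:ℝ))*a₁*a₂*d₂*d₃*t + (1/8:ℝ)*a₁*a₂*d₂^2*t) * hQ₃ + ((-(1/2:ℝ))*b₃^2*t + (1/2:ℝ)*c₂^2*b₃^2*t + (1/2:ℝ)*b₂*b₃*t + (-(1/2:ℝ))*b₂*c₂^2*b₃*t + (1/2:ℝ)*b₂^2*b₃^2*t + (-(1/2:ℝ))*b₂^3*b₃*t + (-(1/2:ℝ))*a₂*d₂*b₃^2*t + (1/2:ℝ)*a₂*b₂*d₂*b₃*t) * h₁ + ((-(1/2:ℝ))*t + (1/2:ℝ)*b₃^2*t + (-(1/4:ℝ))*d₂*a₃*t + (1/2:ℝ)*c₂*c₃*t + (-(1/4:ℝ))*a₂*d₃*t + (-(1/8:ℝ))*d₁*d₂*a₃^2*t + (1/4:ℝ)*d₁*c₂*a₃*c₃*t + (1/4:ℝ)*d₁*b₂*a₃*b₃*t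 + (-(1/4:ℝ))*d₁*a₂*t + (-(1/8:ℝ))*d₁*a₂*a₃*d₃*t + (1/8:ℝ)*d₁^2*a₃^2*t + (-(1/8:ℝ))*d₁^2*a₂*a₃*t + (1/4:ℝ)*c₁*d₂*a₃*c₃*t + (1/2:ℝ)*c₁*c₂*t + (-(1/2:ℝ))*c₁*c₂*c₃^2*t + (-(1/2:ℝ))*c₁*b₂*b₃*c₃*t + (1/4:ℝ)*c₁*a₂*c₃*d₃*t + (-(1/2:ℝ))*c₁*d₁*a₃*c₃*t + (1/4:ℝ)*c₁*d₁*c₂*a₃*t + (1/4:ℝ)*c₁*d₁*a₂*c₃*t + (1/2:ℝ)*c₁^2*c₃^2*t + (-(1/2:ℝ))*c₁^2*b₃^2*t + (-(1/2:ℝ))*c₁^2*c₂*c₃*t + (1/2:ℝ)*c₁^2*b₂*b₃*t + (1/4:ℝ)*b₁*d₂*a₃*b₃*t + (-(1/2:ℝ))*b₁*c₂*b₃*c₃*t + (1/2:ℝ)*b₁*b₂*t + (-(1/2:ℝ))*b₁*b₂*b₃^2*t + (1/4:ℝ)*b₁*a₂*b₃*d₃*t + (-(1/2:ℝ))*b₁*d₁*a₃*b₃*t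 + (1/4:ℝ)*b₁*d₁*b₂*a₃*t + (1/4:ℝ)*b₁*d₁*a₂*b₃*t + b₁*c₁*b₃*c₃*t + (-(1/2:ℝ))*b₁*c₁*c₂*b₃*t + (-(1/2:ℝ))*b₁*c₁*b₂*c₃*t + (-(1/4:ℝ))*a₁*d₂*t + (-(1/8:ℝ))*a₁*d₂*a₃*d₃*t + (1/4:ℝ)*a₁*c₂*c₃*d₃*t + (1/4:ℝ)*a₁*b₂*b₃*d₃*t + (-(1/8:ℝ))*a₁*a₂*d₃^2*t + (1/2:ℝ)*a₁*d₁*b₃^2*t + (1/4:ℝ)*a₁*d₁*a₃*d₃*t + (-(1/8:ℝ))*a₁*d₁*d₂*a₃*t + (-(1/2:ℝ))*a₁*d₁*b₂*b₃*t + (-(1/8:ℝ))*a₁*d₁*a₂*d₃*t + (-(1/2:ℝ))*a₁*c₁*c₃*d₃*t + (1/4:ℝ)*a₁*c₁*d₂*c₃*t + (1/4:ℝ)*a₁*c₁*c₂*d₃*t + (-(1/2:ℝ))*a₁*b₁*b₃*d₃*t + (1/4:ℝ)*a₁*b₁*d₂*b₃*t + (1/4:ℝ)*a₁*b₁*b₂*d₃*t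 + (1/8:ℝ)*a₁^2*d₃^2*t + (-(1/8:ℝ))*a₁^2*d₂*d₃*t) * h₂
  have key3 : U * (2*b₀*b₃ + 2*c₀*c₃ - a₀*d₃ - a₃*d₀) = U * (2*t) := by
    linear_combination (2*b₃)*eb + (2*c₃)*ec - d₃*ea - a₃*ed + ((-1:ℝ)*a₃*ε*s) * hΔ₁ + ((2:ℝ)*b₃*ε*s) * hΔ₂ + ((2:ℝ)*c₃*ε*s) * hΔ₃ + ((-1:ℝ)*d₃*ε*s) * hΔ₄ + ((-2:ℝ)*t) * hU + ((2:ℝ)*c₃^2*t + (2:ℝ)*b₃^2*t + (-2:ℝ)*a₃*d₃*t) * hv₁ + ((-1:ℝ)*d₁*a₃*t + (2:ℝ)*c₁*c₃*t + (2:ℝ)*b₁*b₃*t + (-1:ℝ)*a₁*d₃*t) * hv₂ + ((-1:ℝ)*d₂*a₃*t + (2:ℝ)*c₂*c₃*t + (2:ℝ)*b₂*b₃*t + (-1:ℝ)*a₂*d₃*t) * hv₃ + ((-(1/4:ℝ))*t + t*Q₃ + t*Q₂ + (-2:ℝ)*t*Q₂*Q₃ + (-(1/2:ℝ))*t*Q₁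 + (1/4:ℝ)*c₃^2*t + (-(1/2:ℝ))*c₃^2*t*Q₃ + (-(1/2:ℝ))*c₃^2*t*Q₂ + (1/2:ℝ)*c₃^2*t*Q₁ + (1/4:ℝ)*b₃^2*t + (-(1/2:ℝ))*b₃^2*t*Q₃ + (-(1/2:ℝ))*b₃^2*t*Q₂ + (1/2:ℝ)*b₃^2*t*Q₁ + (-(1/4:ℝ))*a₃*d₃*t + (1/2:ℝ)*a₃*d₃*t*Q₃ + (1/2:ℝ)*a₃*d₃*t*Q₂ + (-(1/2:ℝ))*a₃*d₃*t*Q₁ + (1/4:ℝ)*d₂*a₃*t*Q₃ + (-(1/2:ℝ))*c₂*c₃*t*Q₃ + (-(1/2:ℝ))*b₂*b₃*t*Q₃ + (1/4:ℝ)*a₂*d₃*t*Q₃ + (1/4:ℝ)*d₁*a₃*t*Q₂ + (-(1/8:ℝ))*d₁*a₂*t + (1/8:ℝ)*d₁*a₂*c₃^2*t + (1/8:ℝ)*d₁*a₂*b₃^2*t + (-(1/8:ℝ))*d₁*a₂*a₃*d₃*t + (-(1/2:ℝ))*c₁*c₃*t*Q₂ + (1/4:ℝ)*c₁*c₂*t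 + (-(1/4:ℝ))*c₁*c₂*c₃^2*t + (-(1/4:ℝ))*c₁*c₂*b₃^2*t + (1/4:ℝ)*c₁*c₂*a₃*d₃*t + (-(1/2:ℝ))*b₁*b₃*t*Q₂ + (1/4:ℝ)*b₁*b₂*t + (-(1/4:ℝ))*b₁*b₂*c₃^2*t + (-(1/4:ℝ))*b₁*b₂*b₃^2*t + (1/4:ℝ)*b₁*b₂*a₃*d₃*t + (1/4:ℝ)*a₁*d₃*t*Q₂ + (-(1/8:ℝ))*a₁*d₂*t + (1/8:ℝ)*a₁*d₂*c₃^2*t + (1/8:ℝ)*a₁*d₂*b₃^2*t + (-(1/8:ℝ))*a₁*d₂*a₃*d₃*t) * hQ₁ + ((1/4:ℝ)*t + (-(1/2:ℝ))*t*Q₂ + (-(1/4:ℝ))*c₃^2*t + (-(1/4:ℝ))*b₃^2*t + (1/4:ℝ)*a₃*d₃*t + (-(1/8:ℝ))*d₂*a₃*t + (1/4:ℝ)*d₂*a₃*t*Q₃ + (1/4:ℝ)*c₂*c₃*t + (-(1/2:ℝ))*c₂*c₃*t*Q₃ + (1/4:ℝ)*b₂*b₃*t + (-(1/2:ℝ))*b₂*b₃*t*Q₃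 + (-(1/8:ℝ))*a₂*d₃*t + (1/4:ℝ)*a₂*d₃*t*Q₃ + (1/4:ℝ)*d₁*a₃*t*Q₃ + (-(1/4:ℝ))*d₁*a₃*t*Q₂ + (-(1/16:ℝ))*d₁*d₂*a₃^2*t + (1/8:ℝ)*d₁*c₂*a₃*c₃*t + (1/8:ℝ)*d₁*b₂*a₃*b₃*t + (1/4:ℝ)*d₁*a₂*t + (-(1/2:ℝ))*d₁*a₂*t*Q₃ + (-(1/8:ℝ))*d₁*a₂*c₃^2*t + (-(1/8:ℝ))*d₁*a₂*b₃^2*t + (1/16:ℝ)*d₁*a₂*a₃*d₃*t + (1/16:ℝ)*d₁^2*a₂*a₃*t + (-(1/2:ℝ))*c₁*c₃*t*Q₃ + (1/2:ℝ)*c₁*c₃*t*Q₂ + (1/8:ℝ)*c₁*d₂*a₃*c₃*t + (-(1/2:ℝ))*c₁*c₂*t + c₁*c₂*t*Q₃ + (1/4:ℝ)*c₁*c₂*b₃^2*t + (-(1/4:ℝ))*c₁*c₂*a₃*d₃*t + (-(1/4:ℝ))*c₁*b₂*b₃*c₃*t + (1/8:ℝ)*c₁*a₂*c₃*d₃*t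 + (-(1/8:ℝ))*c₁*d₁*c₂*a₃*t + (-(1/8:ℝ))*c₁*d₁*a₂*c₃*t + (1/4:ℝ)*c₁^2*c₂*c₃*t + (-(1/2:ℝ))*b₁*b₃*t*Q₃ + (1/2:ℝ)*b₁*b₃*t*Q₂ + (1/8:ℝ)*b₁*d₂*a₃*b₃*t + (-(1/4:ℝ))*b₁*c₂*b₃*c₃*t + (-(1/2:ℝ))*b₁*b₂*t + b₁*b₂*t*Q₃ + (1/4:ℝ)*b₁*b₂*c₃^2*t + (-(1/4:ℝ))*b₁*b₂*a₃*d₃*t + (1/8:ℝ)*b₁*a₂*b₃*d₃*t + (-(1/8:ℝ))*b₁*d₁*b₂*a₃*t + (-(1/8:ℝ))*b₁*d₁*a₂*b₃*t + (1/4:ℝ)*b₁*c₁*c₂*b₃*t + (1/4:ℝ)*b₁*c₁*b₂*c₃*t + (1/4:ℝ)*b₁^2*b₂*b₃*t + (1/4:ℝ)*a₁*d₃*t*Q₃ + (-(1/4:ℝ))*a₁*d₃*t*Q₂ + (1/4:ℝ)*a₁*d₂*t + (-(1/2:ℝ))*a₁*d₂*t*Q₃ + (-(1/8:ℝ))*a₁*d₂*c₃^2*t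 + (-(1/8:ℝ))*a₁*d₂*b₃^2*t + (1/16:ℝ)*a₁*d₂*a₃*d₃*t + (1/8:ℝ)*a₁*c₂*c₃*d₃*t + (1/8:ℝ)*a₁*b₂*b₃*d₃*t + (-(1/16:ℝ))*a₁*a₂*d₃^2*t + (1/16:ℝ)*a₁*d₁*d₂*a₃*t + (1/16:ℝ)*a₁*d₁*a₂*d₃*t + (-(1/8:ℝ))*a₁*c₁*d₂*c₃*t + (-(1/8:ℝ))*a₁*c₁*c₂*d₃*t + (-(1/8:ℝ))*a₁*b₁*d₂*b₃*t + (-(1/8:ℝ))*a₁*b₁*b₂*d₃*t + (1/16:ℝ)*a₁^2*d₂*d₃*t) * hQ₂ + ((1/4:ℝ)*t + (-(1/2:ℝ))*t*Q₃ + (-(1/4:ℝ))*c₃^2*t + (-(1/4:ℝ))*b₃^2*t + (1/4:ℝ)*a₃*d₃*t + (1/8:ℝ)*d₂*a₃*t + (-(1/4:ℝ))*d₂*a₃*t*Q₃ + (1/16:ℝ)*d₂^2*a₃^2*t + (-(1/4:ℝ))*c₂*c₃*t + (1/2:ℝ)*c₂*c₃*t*Q₃ + (-(1/4:ℝ))*c₂*d₂*a₃*c₃*t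 + (1/4:ℝ)*c₂^2*c₃^2*t + (-(1/4:ℝ))*b₂*b₃*t + (1/2:ℝ)*b₂*b₃*t*Q₃ + (-(1/4:ℝ))*b₂*d₂*a₃*b₃*t + (1/2:ℝ)*b₂*c₂*b₃*c₃*t + (1/4:ℝ)*b₂^2*b₃^2*t + (1/8:ℝ)*a₂*d₃*t + (-(1/4:ℝ))*a₂*d₃*t*Q₃ + (1/8:ℝ)*a₂*d₂*a₃*d₃*t + (-(1/4:ℝ))*a₂*c₂*c₃*d₃*t + (-(1/4:ℝ))*a₂*b₂*b₃*d₃*t + (1/16:ℝ)*a₂^2*d₃^2*t + (-(1/8:ℝ))*d₁*a₂*c₃^2*t + (-(1/8:ℝ))*d₁*a₂*b₃^2*t + (1/8:ℝ)*d₁*a₂*a₃*d₃*t + (-(1/16:ℝ))*d₁*a₂*d₂*a₃*t + (1/8:ℝ)*d₁*a₂*c₂*c₃*t + (1/8:ℝ)*d₁*a₂*b₂*b₃*t + (-(1/16:ℝ))*d₁*a₂^2*d₃*t + (1/4:ℝ)*c₁*c₂*c₃^2*t + (1/4:ℝ)*c₁*c₂*b₃^2*t + (-(1/4:ℝ))*c₁*c₂*a₃*d₃*t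 + (1/8:ℝ)*c₁*c₂*d₂*a₃*t + (-(1/4:ℝ))*c₁*c₂^2*c₃*t + (-(1/4:ℝ))*c₁*b₂*c₂*b₃*t + (1/8:ℝ)*c₁*a₂*c₂*d₃*t + (1/4:ℝ)*b₁*b₂*c₃^2*t + (1/4:ℝ)*b₁*b₂*b₃^2*t + (-(1/4:ℝ))*b₁*b₂*a₃*d₃*t + (1/8:ℝ)*b₁*b₂*d₂*a₃*t + (-(1/4:ℝ))*b₁*b₂*c₂*c₃*t + (-(1/4:ℝ))*b₁*b₂^2*b₃*t + (1/8:ℝ)*b₁*a₂*b₂*d₃*t + (-(1/8:ℝ))*a₁*d₂*c₃^2*t + (-(1/8:ℝ))*a₁*d₂*b₃^2*t + (1/8:ℝ)*a₁*d₂*a₃*d₃*t + (-(1/16:ℝ))*a₁*d₂^2*a₃*t + (1/8:ℝ)*a₁*c₂*d₂*c₃*t + (1/8:ℝ)*a₁*b₂*d₂*b₃*t + (-(1/16:ℝ))*a₁*a₂*d₂*d₃*t) * hQ₃ + ((1/2:ℝ)*b₂*b₃*t + (-(1/2:ℝ))*b₂*b₃*c₃^2*t + (-(1/2:ℝ))*b₂*b₃^3*t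 + (1/2:ℝ)*b₂*a₃*b₃*d₃*t + (-(1/2:ℝ))*b₂^2*t + (1/2:ℝ)*b₂^2*c₃^2*t + (1/2:ℝ)*b₂^2*b₃^2*t + (-(1/2:ℝ))*b₂^2*a₃*d₃*t) * h₁ + ((-(1/2:ℝ))*t + (1/2:ℝ)*c₃^2*t + (1/2:ℝ)*b₃^2*t + (-(1/2:ℝ))*a₃*d₃*t + (1/2:ℝ)*c₁^2*t + (-(1/2:ℝ))*c₁^2*c₃^2*t + (-(1/2:ℝ))*c₁^2*b₃^2*t + (1/2:ℝ)*c₁^2*a₃*d₃*t + (1/2:ℝ)*b₁*b₃*t + (-(1/2:ℝ))*b₁*b₃*c₃^2*t + (-(1/2:ℝ))*b₁*b₃^3*t + (1/2:ℝ)*b₁*a₃*b₃*d₃*t + (-(1/2:ℝ))*a₁*d₁*t + (1/2:ℝ)*a₁*d₁*c₃^2*t + (1/2:ℝ)*a₁*d₁*b₃^2*t + (-(1/2:ℝ))*a₁*d₁*a₃*d₃*t) * h₂ + ((-(1/4:ℝ))*d₂*a₃*t + (1/2:ℝ)*c₂*c₃*t + (-(1/2:ℝ))*c₂^2*t + (-(1/4:ℝ))*a₂*d₃*t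 + (1/2:ℝ)*a₂*d₂*t + (-(1/4:ℝ))*d₁*a₃*t + (-(1/8:ℝ))*d₁*a₂*d₂*a₃*t + (1/4:ℝ)*d₁*a₂*c₂*c₃*t + (1/4:ℝ)*d₁*a₂*b₂*b₃*t + (-(1/8:ℝ))*d₁*a₂^2*d₃*t + (-(1/8:ℝ))*d₁^2*a₂*a₃*t + (1/8:ℝ)*d₁^2*a₂^2*t + (1/2:ℝ)*c₁*c₃*t + (1/4:ℝ)*c₁*c₂*d₂*a₃*t + (-(1/2:ℝ))*c₁*c₂^2*c₃*t + (-(1/2:ℝ))*c₁*b₂*c₂*b₃*t + (1/4:ℝ)*c₁*a₂*c₂*d₃*t + (1/4:ℝ)*c₁*d₁*c₂*a₃*t + (1/4:ℝ)*c₁*d₁*a₂*c₃*t + (-(1/2:ℝ))*c₁*d₁*a₂*c₂*t + (-(1/2:ℝ))*c₁^2*t + (-(1/2:ℝ))*c₁^2*c₂*c₃*t + c₁^2*c₂^2*t + (1/2:ℝ)*c₁^2*b₂*b₃*t + (-(1/2:ℝ))*c₁^2*a₂*d₂*t + (1/2:ℝ)*b₁*c₂^2*b₃*t + (1/4:ℝ)*b₁*b₂*d₂*a₃*t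 + (-(1/2:ℝ))*b₁*b₂*c₂*c₃*t + (-(1/2:ℝ))*b₁*a₂*d₂*b₃*t + (1/4:ℝ)*b₁*a₂*b₂*d₃*t + (1/4:ℝ)*b₁*d₁*b₂*a₃*t + (1/4:ℝ)*b₁*d₁*a₂*b₃*t + (-(1/2:ℝ))*b₁*d₁*a₂*b₂*t + (-(1/2:ℝ))*b₁*c₁*c₂*b₃*t + (-(1/2:ℝ))*b₁*c₁*b₂*c₃*t + b₁*c₁*b₂*c₂*t + (-(1/4:ℝ))*a₁*d₃*t + (-(1/8:ℝ))*a₁*d₂^2*a₃*t + (1/4:ℝ)*a₁*c₂*d₂*c₃*t + (1/4:ℝ)*a₁*b₂*d₂*b₃*t + (-(1/8:ℝ))*a₁*a₂*d₂*d₃*t + (1/2:ℝ)*a₁*d₁*t + (-(1/8:ℝ))*a₁*d₁*d₂*a₃*t + (-(1/2:ℝ))*a₁*d₁*c₂^2*t + (-(1/2:ℝ))*a₁*d₁*b₂*b₃*t + (-(1/8:ℝ))*a₁*d₁*a₂*d₃*t + (3/4:ℝ)*a₁*d₁*a₂*d₂*t + (1/4:ℝ)*a₁*c₁*d₂*c₃*t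 + (1/4:ℝ)*a₁*c₁*c₂*d₃*t + (-(1/2:ℝ))*a₁*c₁*c₂*d₂*t + (1/4:ℝ)*a₁*b₁*d₂*b₃*t + (1/4:ℝ)*a₁*b₁*b₂*d₃*t + (-(1/2:ℝ))*a₁*b₁*b₂*d₂*t + (-(1/8:ℝ))*a₁^2*d₂*d₃*t + (1/8:ℝ)*a₁^2*d₂^2*t) * h₃
  exact ⟨mul_left_cancel₀ (pow_ne_zero 2 hU0) key0,
    mul_left_cancel₀ hU0 key1, mul_left_cancel₀ hU0 key2, mul_left_cancel₀ hU0 key3⟩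
end

section
/- Let K₁, K₂, K₃ be three normalized circle quadruples with a₁ = a₂ = a₃ = 0 (three oriented straight lines, so b_i² + c_i² = 1). Then U = 0. -/
theorem stmt_18
    (a₁ b₁ c₁ d₁ a₂ b₂ c₂ d₂ a₃ b₃ c₃ d₃ : ℝ)
    (h₁ : b₁^2 + c₁^2 - a₁*d₁ = 1)
    (h₂ : b₂^2 + c₂^2 - a₂*d₂ = 1)
    (h₃ : b₃^2 + c₃^2 - a₃*d₃ = 1)
    (ha₁ : a₁ = 0) (ha₂ : a₂ = 0) (ha₃ : a₃ = 0)
    (Q₁ Q₂ Q₃ : ℝ)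
    (hQ₁ : 4*Q₁ = 2 + a₁*d₂ + a₂*d₁ - 2*(b₁*b₂ + c₁*c₂))
    (hQ₂ : 4*Q₂ = 2 + a₂*d₃ + a₃*d₂ - 2*(b₂*b₃ + c₂*c₃))
    (hQ₃ : 4*Q₃ = 2 + a₃*d₁ + a₁*d₃ - 2*(b₃*b₁ + c₃*c₁))
    (U : ℝ)
    (hU : U = Q₁*(Q₁-2*Q₂) + Q₂*(Q₂-2*Q₃) + Q₃*(Q₃-2*Q₁) + 4*Q₁*Q₂*Q₃) :
    U = 0 := by
  subst ha₁ ha₂ ha₃ hU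
  have q1 : Q₁ = (2 - 2*(b₁*b₂ + c₁*c₂))/4 := by linarith
  have q2 : Q₂ = (2 - 2*(b₂*b₃ + c₂*c₃))/4 := by linarith
  have q3 : Q₃ = (2 - 2*(b₃*b₁ + c₃*c₁))/4 := by linarith
  subst q1 q2 q3
  linear_combination (1/4)*((b₂^2+c₂^2)*(b₃^2+c₃^2) - (b₂*b₃+c₂*c₃)^2) * h₁
    + (1/4)*((b₃^2+c₃^2) - (b₃*b₁+c₃*c₁)^2) * h₂
    + (1/4)*(1 - (b₁*b₂+c₁*c₂)^2) * h₃
end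

section
/- For any three normalized circle quadruples K₁, K₂, K₃, one has U ≥ −1/4; equivalently (by the identity 4U = Δ₂² + Δ₃² − Δ₁Δ₄), Δ₂² + Δ₃² − Δ₁Δ₄ ≥ −1. (Although the defining formula for U in terms of Q₁,Q₂,Q₃ alone allows values below −1/4, such values are not realized by any actual triple of circles.) -/
private lemma cs3 (u1 u2 u3 w1 w2 w3 : ℝ) :
    (u1*w1 + u2*w2 + u3*w3)^2 ≤ (u1^2 + u2^2 + u3^2) * (w1^2 + w2^2 + w3^2) := by
  nlinarith [sq_nonneg (u1*w2 - u2*w1), sq_nonneg (u1*w3 - u3*w1), sq_nonneg (u2*w3 - u3*w2)]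

set_option maxHeartbeats 1000000 in
private lemma gram_id (p1 r1 s1 q1 p2 r2 s2 q2 p3 r3 s3 q3 x y z D w1 w2 w3 : ℝ)
    (n1 : p1^2 + r1^2 + s1^2 - q1^2 = 1)
    (n2 : p2^2 + r2^2 + s2^2 - q2^2 = 1)
    (n3 : p3^2 + r3^2 + s3^2 - q3^2 = 1)
    (hx : x = p1*p2 + r1*r2 + s1*s2 - q1*q2)
    (hy : y = p2*p3 + r2*r3 + s2*s3 - q2*q3)
    (hz : z = p3*p1 + r3*r1 + s3*s1 - q3*q1)
    (hD : D = p1*(r2*s3 - s2*r3) - r1*(p2*s3 - s2*p3) + s1*(p2*r3 - r2*p3))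
    (hw1 : w1 = q1*(r2*s3 - s2*r3) + q2*(r3*s1 - s3*r1) + q3*(r1*s2 - s1*r2))
    (hw2 : w2 = q1*(s2*p3 - p2*s3) + q2*(s3*p1 - p3*s1) + q3*(s1*p2 - p1*s2))
    (hw3 : w3 = q1*(p2*r3 - r2*p3) + q2*(p3*r1 - r3*p1) + q3*(p1*r2 - r1*p2)) :
    x^2 + y^2 + z^2 - 2*x*y*z = 1 - D^2 + (w1^2 + w2^2 + w3^2) := by
    linear_combination ((-2)*y*z + x + (-1)*q1*q2 + s1*s2 + r1*r2 + p1*p2) * hx +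
      (y + (-1)*q2*q3 + s2*s3 + r2*r3 + p2*p3 + 2*q1*q2*z + (-2)*s1*s2*z + (-2)*r1*r2*z + (-2)*p1*p2*z) * hy +
      (z + (-1)*q1*q3 + (-2)*q1*q2^2*q3 + 2*q1*s2*q2*s3 + 2*q1*r2*q2*r3 + 2*q1*p2*q2*p3 + s1*s3 + 2*s1*s2*q2*q3 + (-2)*s1*s2^2*s3 + (-2)*s1*r2*s2*r3 + (-2)*s1*p2*s2*p3 + r1*r3 + 2*r1*r2*q2*q3 + (-2)*r1*r2*s2*s3 + (-2)*r1*r2^2*r3 + (-2)*r1*p2*r2*p3 + p1*p3 + 2*p1*p2*q2*q3 + (-2)*p1*p2*s2*s3 + (-2)*p1*p2*r2*r3 + (-2)*p1*p2^2*p3) * hz +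
      (D + (-1)*s1*r2*p3 + s1*p2*r3 + r1*s2*p3 + (-1)*r1*p2*s3 + (-1)*p1*s2*r3 + p1*r2*s3) * hD +
      ((-1)*w1 + q1*s2*r3 + (-1)*q1*r2*s3 + (-1)*s1*q2*r3 + s1*r2*q3 + r1*q2*s3 + (-1)*r1*s2*q3) * hw1 +
      ((-1)*w2 + (-1)*q1*s2*p3 + q1*p2*s3 + s1*q2*p3 + (-1)*s1*p2*q3 + (-1)*p1*q2*s3 + p1*s2*q3) * hw2 +
      ((-1)*w3 + q1*r2*p3 + (-1)*q1*p2*r3 + (-1)*r1*q2*p3 + r1*p2*q3 + p1*q2*r3 + (-1)*p1*r2*q3) * hw3 +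
      (p3^2 + (-1)*q2^2*s3^2 + (-1)*q2^2*r3^2 + 2*s2*q2*s3*q3 + (-1)*s2^2*q3^2 + s2^2*r3^2 + 2*r2*q2*r3*q3 + (-2)*r2*s2*r3*s3 + (-1)*r2^2*q3^2 + r2^2*s3^2 + 2*p2*q2*p3*q3 + (-2)*p2*s2*p3*s3 + (-2)*p2*r2*p3*r3 + p2^2 + (-2)*p2^2*p3^2) * n1 +
      (1 + (-1)*p3^2 + q1^2 + (-1)*q1^2*s3^2 + (-1)*q1^2*r3^2 + (-2)*q1^2*p3^2 + 2*s1*q1*s3*q3 + (-1)*s1^2 + (-1)*s1^2*q3^2 + s1^2*r3^2 + 2*s1^2*p3^2 + 2*r1*q1*r3*q3 + (-2)*r1*s1*r3*s3 + (-1)*r1^2 + (-1)*r1^2*q3^2 + r1^2*s3^2 + 2*r1^2*p3^2 + 2*p1*q1*p3*q3 + (-2)*p1*s1*p3*s3 + (-2)*p1*r1*p3*r3) * n2 +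
      ((-1)*q2^2 + s2^2 + r2^2 + (-1)*q1^2 + (-2)*q1^2*q2^2 + q1^2*s2^2 + q1^2*r2^2 + 2*s1*q1*s2*q2 + s1^2 + s1^2*q2^2 + (-2)*s1^2*s2^2 + (-1)*s1^2*r2^2 + 2*r1*q1*r2*q2 + (-2)*r1*s1*r2*s2 + r1^2 + r1^2*q2^2 + (-1)*r1^2*s2^2 + (-2)*r1^2*r2^2 + 2*p1*q1*p2*q2 + (-2)*p1*s1*p2*s2 + (-2)*p1*r1*p2*r2) * n3

set_option maxHeartbeats 1000000 in
private lemma gram_nonneg (p1 r1 s1 q1 p2 r2 s2 q2 p3 r3 s3 q3 x y z D w1 w2 w3 : ℝ)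
    (n1 : p1^2 + r1^2 + s1^2 - q1^2 = 1)
    (n2 : p2^2 + r2^2 + s2^2 - q2^2 = 1)
    (n3 : p3^2 + r3^2 + s3^2 - q3^2 = 1)
    (hx : x = p1*p2 + r1*r2 + s1*s2 - q1*q2)
    (hy : y = p2*p3 + r2*r3 + s2*s3 - q2*q3)
    (hz : z = p3*p1 + r3*r1 + s3*s1 - q3*q1)
    (hD : D = p1*(r2*s3 - s2*r3) - r1*(p2*s3 - s2*p3) + s1*(p2*r3 - r2*p3))
    (hw1 : w1 = q1*(r2*s3 - s2*r3) + q2*(r3*s1 - s3*r1) + q3*(r1*s2 - s1*r2))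
    (hw2 : w2 = q1*(s2*p3 - p2*s3) + q2*(s3*p1 - p3*s1) + q3*(s1*p2 - p1*s2))
    (hw3 : w3 = q1*(p2*r3 - r2*p3) + q2*(p3*r1 - r3*p1) + q3*(p1*r2 - r1*p2)) :
    0 ≤ x^2 + y^2 + z^2 - 2*x*y*z := by
  have hid := gram_id p1 r1 s1 q1 p2 r2 s2 q2 p3 r3 s3 q3 x y z D w1 w2 w3
    n1 n2 n3 hx hy hz hD hw1 hw2 hw3
  rcases le_or_gt (D^2) (w1^2 + w2^2 + w3^2) with hc | hc
  · linarith only [hid, hc]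
  · have hW : (0:ℝ) ≤ w1^2 + w2^2 + w3^2 := by positivity
    have hD2 : 0 < D^2 := lt_of_le_of_lt hW hc
    have upos : (0:ℝ) ≤ (p1 - x*p2)^2 + (r1 - x*r2)^2 + (s1 - x*s2)^2 := by positivity
    have hperp : (p1 - x*p2)*w1 + (r1 - x*r2)*w2 + (s1 - x*s2)*w3 = (q1 - x*q2)*D := by
      linear_combination (p1 - x*p2)*hw1 + (r1 - x*r2)*hw2 + (s1 - x*s2)*hw3 - (q1 - x*q2)*hD
    have lag : ((p1 - x*p2)*w1 + (r1 - x*r2)*w2 + (s1 - x*s2)*w3)^2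
        ≤ ((p1 - x*p2)^2 + (r1 - x*r2)^2 + (s1 - x*s2)^2) * (w1^2 + w2^2 + w3^2) := by
      exact cs3 (p1 - x*p2) (r1 - x*r2) (s1 - x*s2) w1 w2 w3
    have chain : (q1 - x*q2)^2 * D^2
        ≤ ((p1 - x*p2)^2 + (r1 - x*r2)^2 + (s1 - x*s2)^2) * D^2 := by
      have e1 : (q1 - x*q2)^2 * D^2
          = ((p1 - x*p2)*w1 + (r1 - x*r2)*w2 + (s1 - x*s2)*w3)^2 := by
        rw [hperp]; ring
      rw [e1]
      calc ((p1 - x*p2)*w1 + (r1 - x*r2)*w2 + (s1 - x*s2)*w3)^2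
          ≤ ((p1 - x*p2)^2 + (r1 - x*r2)^2 + (s1 - x*s2)^2) * (w1^2 + w2^2 + w3^2) := lag
        _ ≤ ((p1 - x*p2)^2 + (r1 - x*r2)^2 + (s1 - x*s2)^2) * D^2 :=
            mul_le_mul_of_nonneg_left hc.le upos
    have key : (q1 - x*q2)^2 ≤ (p1 - x*p2)^2 + (r1 - x*r2)^2 + (s1 - x*s2)^2 :=
      le_of_mul_le_mul_right chain hD2
    have hid2 : ((p1 - x*p2)^2 + (r1 - x*r2)^2 + (s1 - x*s2)^2) - (q1 - x*q2)^2 = 1 - x^2 := by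
      linear_combination n1 + x^2 * n2 + 2*x*hx
    have hx2 : x^2 ≤ 1 := by linarith only [key, hid2]
    have t0 : x^2 + y^2 + z^2 - 2*x*y*z = (x*y - z)^2 + x^2 + y^2*(1 - x^2) := by ring
    have t1 : 0 ≤ y^2*(1 - x^2) := mul_nonneg (sq_nonneg y) (by linarith only [hx2])
    rw [t0]
    have := sq_nonneg (x*y - z)
    have := sq_nonneg x
    linarith only [t1, sq_nonneg (x*y - z), sq_nonneg x]

set_option maxHeartbeats 1000000 in
theorem stmt_19
    (a₁ b₁ c₁ d₁ a₂ b₂ c₂ d₂ a₃ b₃ c₃ d₃ : ℝ)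
    (h₁ : b₁^2 + c₁^2 - a₁*d₁ = 1)
    (h₂ : b₂^2 + c₂^2 - a₂*d₂ = 1)
    (h₃ : b₃^2 + c₃^2 - a₃*d₃ = 1)
    (Q₁ Q₂ Q₃ : ℝ)
    (hQ₁ : 4*Q₁ = 2 + a₁*d₂ + a₂*d₁ - 2*(b₁*b₂ + c₁*c₂))
    (hQ₂ : 4*Q₂ = 2 + a₂*d₃ + a₃*d₂ - 2*(b₂*b₃ + c₂*c₃))
    (hQ₃ : 4*Q₃ = 2 + a₃*d₁ + a₁*d₃ - 2*(b₃*b₁ + c₃*c₁))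
    (U : ℝ)
    (hU : U = Q₁*(Q₁-2*Q₂) + Q₂*(Q₂-2*Q₃) + Q₃*(Q₃-2*Q₁) + 4*Q₁*Q₂*Q₃)
    (Δ₁ Δ₂ Δ₃ Δ₄ : ℝ)
    (hΔ₁ : Δ₁ = -Matrix.det !![b₁,c₁,d₁; b₂,c₂,d₂; b₃,c₃,d₃])
    (hΔ₂ : Δ₂ = -(1/2) * Matrix.det !![a₁,c₁,d₁; a₂,c₂,d₂; a₃,c₃,d₃])
    (hΔ₃ : Δ₃ = (1/2) * Matrix.det !![a₁,b₁,d₁; a₂,b₂,d₂; a₃,b₃,d₃])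
    (hΔ₄ : Δ₄ = Matrix.det !![a₁,b₁,c₁; a₂,b₂,c₂; a₃,b₃,c₃]) :
    -(1/4) ≤ U ∧ -1 ≤ Δ₂^2 + Δ₃^2 - Δ₁*Δ₄ := by
  have key := gram_nonneg ((a₁-d₁)/2) b₁ c₁ ((a₁+d₁)/2) ((a₂-d₂)/2) b₂ c₂ ((a₂+d₂)/2)
    ((a₃-d₃)/2) b₃ c₃ ((a₃+d₃)/2) (1-2*Q₁) (1-2*Q₂) (1-2*Q₃) (((a₁-d₁)/2)*(b₂*c₃ - c₂*b₃) - b₁*(((a₂-d₂)/2)*c₃ - c₂*((a₃-d₃)/2)) + c₁*(((a₂-d₂)/2)*b₃ - b₂*((a₃-d₃)/2))) (((a₁+d₁)/2)*(b₂*c₃ - c₂*b₃) + ((a₂+d₂)/2)*(b₃*c₁ - c₃*b₁) + ((a₃+d₃)/2)*(b₁*c₂ - c₁*b₂)) (((a₁+d₁)/2)*(c₂*((a₃-d₃)/2) - ((a₂-d₂)/2)*c₃) + ((a₂+d₂)/2)*(c₃*((a₁-d₁)/2) - ((a₃-d₃)/2)*c₁) + ((a₃+d₃)/2)*(c₁*((a₂-d₂)/2)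 - ((a₁-d₁)/2)*c₂)) (((a₁+d₁)/2)*(((a₂-d₂)/2)*b₃ - b₂*((a₃-d₃)/2)) + ((a₂+d₂)/2)*(((a₃-d₃)/2)*b₁ - b₃*((a₁-d₁)/2)) + ((a₃+d₃)/2)*(((a₁-d₁)/2)*b₂ - b₁*((a₂-d₂)/2)))
    (by linear_combination h₁) (by linear_combination h₂) (by linear_combination h₃)
    (by linear_combination (-(1:ℝ)/2)*hQ₁) (by linear_combination (-(1:ℝ)/2)*hQ₂)
    (by linear_combination (-(1:ℝ)/2)*hQ₃) rfl rfl rfl rfl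
  have hid := gram_id ((a₁-d₁)/2) b₁ c₁ ((a₁+d₁)/2) ((a₂-d₂)/2) b₂ c₂ ((a₂+d₂)/2)
    ((a₃-d₃)/2) b₃ c₃ ((a₃+d₃)/2) (1-2*Q₁) (1-2*Q₂) (1-2*Q₃) (((a₁-d₁)/2)*(b₂*c₃ - c₂*b₃) - b₁*(((a₂-d₂)/2)*c₃ - c₂*((a₃-d₃)/2)) + c₁*(((a₂-d₂)/2)*b₃ - b₂*((a₃-d₃)/2))) (((a₁+d₁)/2)*(b₂*c₃ - c₂*b₃) + ((a₂+d₂)/2)*(b₃*c₁ - c₃*b₁) + ((a₃+d₃)/2)*(b₁*c₂ - c₁*b₂)) (((a₁+d₁)/2)*(c₂*((a₃-d₃)/2) - ((a₂-d₂)/2)*c₃) + ((a₂+d₂)/2)*(c₃*((a₁-d₁)/2) - ((a₃-d₃)/2)*c₁) + ((a₃+d₃)/2)*(c₁*((a₂-d₂)/2) - ((a₁-d₁)/2)*c₂)) (((a₁+d₁)/2)*(((a₂-d₂)/2)*b₃ - b₂*((a₃-d₃)/2)) + ((a₂+d₂)/2)*(((a₃-d₃)/2)*b₁ - b₃*((a₁-d₁)/2))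 + ((a₃+d₃)/2)*(((a₁-d₁)/2)*b₂ - b₁*((a₂-d₂)/2)))
    (by linear_combination h₁) (by linear_combination h₂) (by linear_combination h₃)
    (by linear_combination (-(1:ℝ)/2)*hQ₁) (by linear_combination (-(1:ℝ)/2)*hQ₂)
    (by linear_combination (-(1:ℝ)/2)*hQ₃) rfl rfl rfl rfl
  have e1 : (1-2*Q₁)^2 + (1-2*Q₂)^2 + (1-2*Q₃)^2 - 2*(1-2*Q₁)*(1-2*Q₂)*(1-2*Q₃)
      = 1 + 4*U := by linear_combination (-4:ℝ)*hU
  constructor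
  · linarith only [key, e1]
  · simp [Matrix.det_fin_three] at hΔ₁ hΔ₂ hΔ₃ hΔ₄
    subst hΔ₁ hΔ₂ hΔ₃ hΔ₄
    linarith only [key, hid]
end
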